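/- arXiv:2010.14338 — 6 statements merged into one kernel-verified Lean document; each statement's English description precedes it below -/
import Mathlib

section
/- Let (P_Δ, D_Δ) be a triangular instance of size n ≥ 1 and let Q ⊆ ℝ² be a feasible solution for (P_Δ, D_Δ) with |Q| = n. Then Q is contained in the triangular grid G_Δ of the instance. -/
abbrev Pt := ℝ × ℝ
abbrev Dem := Pt × Pt

noncomputable section

/-- ℓ1 distance in the plane. -/
def dist1 (p q : Pt) : ℝ := |p.1 - q.1| + |p.2 - q.2|

/-- Two points are aligned if they are vertically or horizontally aligned. -/
def Aligned (p q : Pt) : Prop := p.1 = q.1 ∨ p.2 = q.2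

/-- `p` and `q` are Manhattan-connected in the point set `S`: the Manhattan graph on `S`
contains a rectilinear path from `p` to `q` of total length `‖p - q‖₁`. -/
def MConnected (S : Set Pt) (p q : Pt) : Prop :=
  ∃ (k : ℕ) (f : Fin (k + 1) → Pt),
    f 0 = p ∧ f (Fin.last k) = q ∧ (∀ i, f i ∈ S) ∧
    (∀ i : Fin k, Aligned (f i.castSucc) (f i.succ)) ∧
    (∑ i : Fin k, dist1 (f i.castSucc) (f i.succ)) = dist1 p q

/-- `Q` is a feasible solution for the instance `(P, D)`. -/
def MFeasible (P : Set Pt) (D : Set Dem) (Q : Set Pt) : Prop :=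
  ∀ d ∈ D, MConnected (P ∪ Q) d.1 d.2

/-- Minimum cardinality of a feasible solution. -/
def optN (P : Set Pt) (D : Set Dem) : ℕ :=
  sInf {n | ∃ Q : Finset Pt, MFeasible P D ↑Q ∧ Q.card = n}

/-- The closed axis-aligned rectangle spanned by `p` and `q`. -/
def Rect (p q : Pt) : Set Pt :=
  {z | min p.1 q.1 ≤ z.1 ∧ z.1 ≤ max p.1 q.1 ∧ min p.2 q.2 ≤ z.2 ∧ z.2 ≤ max p.2 q.2}

/-- The interior of the axis-aligned rectangle spanned by `p` and `q`. -/
def RectInt (p q : Pt) : Set Pt :=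
  {z | min p.1 q.1 < z.1 ∧ z.1 < max p.1 q.1 ∧ min p.2 q.2 < z.2 ∧ z.2 < max p.2 q.2}

/-- The four corners of the rectangle spanned by `p` and `q`. -/
def Corners (p q : Pt) : Set Pt := {(p.1, p.2), (p.1, q.2), (q.1, p.2), (q.1, q.2)}

/-- Two demand rectangles are non-conflicting if neither contains a corner of the other
in its interior. -/
def NonConflicting (d e : Dem) : Prop :=
  (∀ c ∈ Corners e.1 e.2, c ∉ RectInt d.1 d.2) ∧
  (∀ c ∈ Corners d.1 d.2, c ∉ RectInt e.1 e.2)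

/-- `IRN D` : maximum cardinality of an independent (pairwise non-conflicting) subset of `D`. -/
def IRN (D : Set Dem) : ℕ :=
  sSup {n | ∃ D' : Finset Dem, ↑D' ⊆ D ∧ D'.card = n ∧
    ∀ d ∈ D', ∀ e ∈ D', d ≠ e → NonConflicting d e}

/-- The vertical segment at `x = a` spanning the `y`-range between `y1` and `y2`. -/
def VSeg (a y1 y2 : ℝ) : Set Pt :=
  {z | z.1 = a ∧ min y1 y2 ≤ z.2 ∧ z.2 ≤ max y1 y2}

/-- A finite set of demands is vertically separable: its demand rectangles can be ordered
`R₁, …, R_k` with vertical segments `ℓ₁, …, ℓ_k`, where `ℓᵢ` connects the interior of the top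
boundary of `Rᵢ` with the interior of its bottom boundary and avoids `R_j` for all `j > i`. -/
def VertSeparable (D' : Finset Dem) : Prop :=
  ∃ (e : Fin D'.card → Dem) (a : Fin D'.card → ℝ),
    Function.Injective e ∧ (∀ i, e i ∈ D') ∧
    (∀ i, min (e i).1.1 (e i).2.1 < a i ∧ a i < max (e i).1.1 (e i).2.1) ∧
    ∀ i j : Fin D'.card, i < j →
      VSeg (a i) (e i).1.2 (e i).2.2 ∩ Rect (e j).1 (e j).2 = ∅

/-- `VSN D` : maximum cardinality of a vertically separable subset of `D`. -/
def VSN (D : Set Dem) : ℕ :=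
  sSup {n | ∃ D' : Finset Dem, ↑D' ⊆ D ∧ D'.card = n ∧ VertSeparable D'}

/-- `λ(p,q)` : the left vertical side of the demand rectangle `R(p,q)`. -/
def LSeg (d : Dem) : Set Pt := VSeg d.1.1 d.1.2 d.2.2

/-- `ρ(p,q)` : the right vertical side of the demand rectangle `R(p,q)`. -/
def RSeg (d : Dem) : Set Pt := VSeg d.2.1 d.1.2 d.2.2

/-- A left boundary independent set: the left sides are pairwise non-overlapping. -/
def LeftBIS (D' : Finset Dem) : Prop :=
  ∀ d ∈ D', ∀ e ∈ D', d ≠ e → Set.Subsingleton (LSeg d ∩ LSeg e)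

/-- A right boundary independent set: the right sides are pairwise non-overlapping. -/
def RightBIS (D' : Finset Dem) : Prop :=
  ∀ d ∈ D', ∀ e ∈ D', d ≠ e → Set.Subsingleton (RSeg d ∩ RSeg e)

/-- `ISN D` : maximum cardinality of a (left or right) boundary independent subset of `D`. -/
def ISN (D : Set Dem) : ℕ :=
  sSup {n | ∃ D' : Finset Dem, ↑D' ⊆ D ∧ D'.card = n ∧ (LeftBIS D' ∨ RightBIS D')}

/-- `(P, D)` is a MinGMConn instance: demands are between input points, ordered by
`x`-coordinate. -/
def IsInstance (P : Finset Pt) (D : Finset Dem) : Prop :=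
  ∀ d ∈ D, d.1 ∈ P ∧ d.2 ∈ P ∧ d.1.1 < d.2.1

/-- The points of `P` have pairwise distinct `x`-coordinates. -/
def DistinctX (P : Finset Pt) : Prop := ∀ p ∈ P, ∀ q ∈ P, p ≠ q → p.1 ≠ q.1

/-- The points of `P` have pairwise distinct `y`-coordinates. -/
def DistinctY (P : Finset Pt) : Prop := ∀ p ∈ P, ∀ q ∈ P, p ≠ q → p.2 ≠ q.2

end

noncomputable section

/-- The `i`-th open vertical strip determined by boundaries `b` (with `b 0 = ⊥`, `b s = ⊤`). -/
def strip (s : ℕ) (b : Fin (s + 1) → EReal) (i : Fin s) : Set Pt :=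
  {z | b i.castSucc < (z.1 : EReal) ∧ (z.1 : EReal) < b i.succ}

/-- `b` describes a strip subdivision into `s` vertical strips via `s - 1` vertical lines,
none of which passes through a point of `P`. -/
def IsStripSubdivision (s : ℕ) (b : Fin (s + 1) → EReal) (P : Finset Pt) : Prop :=
  1 ≤ s ∧ StrictMono b ∧ b 0 = ⊥ ∧ b (Fin.last s) = ⊤ ∧
    ∀ p ∈ P, ∀ i : Fin (s + 1), (p.1 : EReal) ≠ b i

/-- The projections `π_𝒮(P)` of the points of `P` onto the adjacent strip boundaries. -/
def stripProj (s : ℕ) (b : Fin (s + 1) → EReal) (P : Set Pt) : Set Pt :=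
  {z | ∃ p ∈ P, ∃ i : Fin s, p ∈ strip s b i ∧
    ((i.val ≠ 0 ∧ z = ((b i.castSucc).toReal, p.2)) ∨
     (i.val + 1 ≠ s ∧ z = ((b i.succ).toReal, p.2)))}

/-- The demand set `π_𝒮(D)` of the inter-strip instance: demands between points in
different, non-adjacent strips, projected to the adjacent strip boundaries. -/
def stripDem (s : ℕ) (b : Fin (s + 1) → EReal) (D : Set Dem) : Set Dem :=
  {d | ∃ pq ∈ D, ∃ i j : Fin s,
    pq.1 ∈ strip s b i ∧ pq.2 ∈ strip s b j ∧ i.val + 2 ≤ j.val ∧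
    d = (((b i.succ).toReal, pq.1.2), ((b j.castSucc).toReal, pq.2.2))}

/-- `p 0, …, p n` form a triangular instance of size `n` :
`x`-coordinates strictly increasing, while `p 1, …, p n` form a descending diagonal
lying to the top-right of `p 0`. -/
def IsTriangular (n : ℕ) (p : Fin (n + 1) → Pt) : Prop :=
  (∀ i j : Fin (n + 1), i < j → (p i).1 < (p j).1) ∧
  (∀ i j : Fin (n + 1), i ≠ 0 → i < j → (p j).2 < (p i).2) ∧
  (∀ i : Fin (n + 1), i ≠ 0 → (p 0).2 < (p i).2)

/-- The point set of a triangular instance. -/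
def triP (n : ℕ) (p : Fin (n + 1) → Pt) : Finset Pt := Finset.image p Finset.univ

/-- The demand set of a triangular instance: `(p 0, p i)` for `1 ≤ i ≤ n`. -/
def triD (n : ℕ) (p : Fin (n + 1) → Pt) : Finset Dem :=
  Finset.image (fun i => (p 0, p i)) (Finset.univ.filter fun i : Fin (n + 1) => i ≠ 0)

/-- The triangular grid of a triangular instance. -/
def triGrid (n : ℕ) (p : Fin (n + 1) → Pt) : Set Pt :=
  {z | (∃ i, z.1 = (p i).1) ∧ (∃ j, z.2 = (p j).2) ∧
    ∃ i : Fin (n + 1), i ≠ 0 ∧ z ∈ Rect (p 0) (p i)}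

/-- `Q` is arboreally satisfied: for every non-aligned pair of its points, the rectangle
they span contains a third point of `Q`. -/
def ArboreallySatisfied (Q : Finset Pt) : Prop :=
  ∀ p ∈ Q, ∀ q ∈ Q, ¬ Aligned p q → ∃ r ∈ Q, r ≠ p ∧ r ≠ q ∧ r ∈ Rect p q

/-- The Manhattan graph on a finite point set `S`. -/
def manhattanGraph (S : Finset Pt) : SimpleGraph {x : Pt // x ∈ S} where
  Adj a b := a ≠ b ∧ Aligned a.1 b.1
  symm := ⟨fun _ _ h => ⟨h.1.symm, h.2.imp Eq.symm Eq.symm⟩⟩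
  loopless := ⟨fun _ h => h.1 rfl⟩

/-- The demand graph of an instance `(P, D)`. -/
def demandGraph (P : Finset Pt) (D : Finset Dem) : SimpleGraph {x : Pt // x ∈ P} where
  Adj a b := a ≠ b ∧ (((a : Pt), (b : Pt)) ∈ D ∨ ((b : Pt), (a : Pt)) ∈ D)
  symm := ⟨fun _ _ h => ⟨h.1.symm, h.2.symm⟩⟩
  loopless := ⟨fun _ h => h.1 rfl⟩

/-- `C` is an axis-aligned rectangle: a product of two intervals. -/
def IsAxisRect (C : Set Pt) : Prop :=
  ∃ I J : Set ℝ, I.OrdConnected ∧ J.OrdConnected ∧ C = I ×ˢ J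

end

namespace Stmt12
open Finset

lemma dist1_nonneg (p q : Pt) : 0 ≤ dist1 p q := by
  unfold dist1; positivity

lemma dist1_self (p : Pt) : dist1 p p = 0 := by
  simp [dist1]

lemma dist1_triangle (p q r : Pt) : dist1 p r ≤ dist1 p q + dist1 q r := by
  have h1 := abs_sub_le p.1 q.1 r.1
  have h2 := abs_sub_le p.2 q.2 r.2
  simp only [dist1]; linarith

lemma abs_add_between {x y z : ℝ} (h1 : min x z ≤ y) (h2 : y ≤ max x z) :
    |x - y| + |y - z| = |x - z| := by
  rcases le_total x z with h | h
  · rw [min_eq_left h] at h1; rw [max_eq_right h] at h2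
    rw [abs_of_nonpos (by linarith), abs_of_nonpos (by linarith),
      abs_of_nonpos (by linarith : x - z ≤ 0)]
    ring
  · rw [min_eq_right h] at h1; rw [max_eq_left h] at h2
    rw [abs_of_nonneg (by linarith), abs_of_nonneg (by linarith),
      abs_of_nonneg (by linarith : (0:ℝ) ≤ x - z)]
    ring

lemma abs_between {x y z : ℝ} (h : |x - y| + |y - z| = |x - z|) :
    min x z ≤ y ∧ y ≤ max x z := by
  have a1 := le_abs_self (x - y); have a2 := neg_abs_le (x - y)
  have b1 := le_abs_self (y - z); have b2 := neg_abs_le (y - z)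
  rcases le_total x z with h' | h'
  · rw [abs_of_nonpos (by linarith : x - z ≤ 0)] at h
    rw [min_eq_left h', max_eq_right h']
    constructor <;> linarith
  · rw [abs_of_nonneg (by linarith : (0:ℝ) ≤ x - z)] at h
    rw [min_eq_right h', max_eq_left h']
    constructor <;> linarith

lemma dist1_add_of_mem_rect {a b c : Pt} (h : b ∈ Rect a c) :
    dist1 a b + dist1 b c = dist1 a c := by
  obtain ⟨h1, h2, h3, h4⟩ := h
  have hx := abs_add_between h1 h2
  have hy := abs_add_between h3 h4
  simp only [dist1]; linarith

lemma mem_rect_of_dist1 {a b c : Pt} (h : dist1 a b + dist1 b c = dist1 a c) :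
    b ∈ Rect a c := by
  have hx' := abs_sub_le a.1 b.1 c.1
  have hy' := abs_sub_le a.2 b.2 c.2
  have hx : |a.1 - b.1| + |b.1 - c.1| = |a.1 - c.1| := by
    simp only [dist1] at h; linarith
  have hy : |a.2 - b.2| + |b.2 - c.2| = |a.2 - c.2| := by
    simp only [dist1] at h; linarith
  obtain ⟨u1, u2⟩ := abs_between hx
  obtain ⟨v1, v2⟩ := abs_between hy
  exact ⟨u1, u2, v1, v2⟩

/-- Paths indexed by ℕ. -/
def NPath (S : Set Pt) (p q : Pt) (k : ℕ) (F : ℕ → Pt) : Prop :=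
  F 0 = p ∧ F k = q ∧ (∀ i, i ≤ k → F i ∈ S) ∧ (∀ i, i < k → Aligned (F i) (F (i+1))) ∧
    ∑ i ∈ Finset.range k, dist1 (F i) (F (i+1)) = dist1 p q

lemma sum_dist_ge (F : ℕ → Pt) (a b : ℕ) (hab : a ≤ b) :
    dist1 (F a) (F b) ≤ ∑ i ∈ Finset.Ico a b, dist1 (F i) (F (i+1)) := by
  induction b, hab using Nat.le_induction with
  | base => simp [dist1_self]
  | succ b hab ih =>
      rw [Finset.sum_Ico_succ_top (by omega : a ≤ b)]
      have := dist1_triangle (F a) (F b) (F (b+1))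
      linarith

lemma npath_of_sum_le {S : Set Pt} {p q : Pt} {k : ℕ} {F : ℕ → Pt}
    (h0 : F 0 = p) (hk : F k = q)
    (hmem : ∀ i, i ≤ k → F i ∈ S) (hal : ∀ i, i < k → Aligned (F i) (F (i+1)))
    (hsum : ∑ i ∈ Finset.range k, dist1 (F i) (F (i+1)) ≤ dist1 p q) :
    NPath S p q k F := by
  refine ⟨h0, hk, hmem, hal, le_antisymm hsum ?_⟩
  have h := sum_dist_ge F 0 k (Nat.zero_le k)
  rw [h0, hk] at h
  rwa [Finset.range_eq_Ico]

lemma npath_sum_Ico {S : Set Pt} {p q : Pt} {k : ℕ} {F : ℕ → Pt}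
    (h : NPath S p q k F) {a b : ℕ} (hab : a ≤ b) (hbk : b ≤ k) :
    ∑ i ∈ Finset.Ico a b, dist1 (F i) (F (i+1)) = dist1 (F a) (F b) := by
  obtain ⟨h0, hk, _, _, hsum⟩ := h
  have s1 := sum_dist_ge F 0 a (Nat.zero_le a)
  have s2 := sum_dist_ge F a b hab
  have s3 := sum_dist_ge F b k hbk
  have split1 : ∑ i ∈ Finset.Ico 0 a, dist1 (F i) (F (i+1))
      + ∑ i ∈ Finset.Ico a b, dist1 (F i) (F (i+1))
      = ∑ i ∈ Finset.Ico 0 b, dist1 (F i) (F (i+1)) :=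
    Finset.sum_Ico_consecutive _ (Nat.zero_le a) hab
  have split2 : ∑ i ∈ Finset.Ico 0 b, dist1 (F i) (F (i+1))
      + ∑ i ∈ Finset.Ico b k, dist1 (F i) (F (i+1))
      = ∑ i ∈ Finset.Ico 0 k, dist1 (F i) (F (i+1)) :=
    Finset.sum_Ico_consecutive _ (Nat.zero_le b) hbk
  have t1 := dist1_triangle p (F a) (F b)
  have t2 := dist1_triangle p (F b) q
  rw [Finset.range_eq_Ico] at hsum
  rw [h0] at s1
  rw [hk] at s3
  linarith

lemma npath_between {S : Set Pt} {p q : Pt} {k : ℕ} {F : ℕ → Pt}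
    (h : NPath S p q k F) {a b c : ℕ} (hab : a ≤ b) (hbc : b ≤ c) (hck : c ≤ k) :
    F b ∈ Rect (F a) (F c) := by
  have s1 := npath_sum_Ico h hab (le_trans hbc hck)
  have s2 := npath_sum_Ico h hbc hck
  have s3 := npath_sum_Ico h (le_trans hab hbc) hck
  have split : ∑ i ∈ Finset.Ico a b, dist1 (F i) (F (i+1))
      + ∑ i ∈ Finset.Ico b c, dist1 (F i) (F (i+1))
      = ∑ i ∈ Finset.Ico a c, dist1 (F i) (F (i+1)) :=
    Finset.sum_Ico_consecutive _ hab hbc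
  exact mem_rect_of_dist1 (by linarith)

lemma npath_prefix {S : Set Pt} {p q : Pt} {k : ℕ} {F : ℕ → Pt}
    (h : NPath S p q k F) {i : ℕ} (hik : i ≤ k) : NPath S p (F i) i F := by
  obtain ⟨h0, hk, hmem, hal, hsum⟩ := h
  refine ⟨h0, rfl, fun j hj => hmem j (le_trans hj hik), fun j hj => hal j (by omega), ?_⟩
  rw [Finset.range_eq_Ico]
  rw [npath_sum_Ico ⟨h0, hk, hmem, hal, hsum⟩ (Nat.zero_le i) hik, h0]

end Stmt12
namespace Stmt12

lemma mconn_of_npath {S : Set Pt} {p q : Pt} {k : ℕ} {F : ℕ → Pt}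
    (h : NPath S p q k F) : MConnected S p q := by
  obtain ⟨h0, hk, hmem, hal, hsum⟩ := h
  refine ⟨k, fun i => F i.val, ?_, ?_, ?_, ?_, ?_⟩
  · simpa using h0
  · simpa [Fin.last] using hk
  · exact fun i => hmem i.val (by omega)
  · intro i
    have := hal i.val i.isLt
    simpa [Fin.castSucc, Fin.succ] using this
  · rw [← hsum, ← Fin.sum_univ_eq_sum_range (fun j => dist1 (F j) (F (j+1))) k]
    apply Finset.sum_congr rfl
    intro i _
    simp

lemma npath_of_mconn {S : Set Pt} {p q : Pt} (h : MConnected S p q) :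
    ∃ k F, NPath S p q k F := by
  obtain ⟨k, f, h0, hk, hmem, hal, hsum⟩ := h
  refine ⟨k, fun i => f ⟨min i k, by omega⟩, ?_, ?_, ?_, ?_, ?_⟩
  · simpa using h0
  · simpa [Fin.last] using hk
  · exact fun i _ => hmem _
  · intro i hi
    have := hal ⟨i, hi⟩
    have e1 : min i k = i := by omega
    have e2 : min (i+1) k = i + 1 := by omega
    simpa [Fin.castSucc, Fin.succ, e1, e2] using this
  · rw [← Fin.sum_univ_eq_sum_range
      (fun j => dist1 (f ⟨min j k, by omega⟩) (f ⟨min (j+1) k, by omega⟩)) k, ← hsum]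
    apply Finset.sum_congr rfl
    intro i _
    have e1 : min i.val k = i.val := by omega
    have e2 : min (i.val+1) k = i.val + 1 := by omega
    congr 1
    · exact congrArg f (Fin.ext (by simp [e1]))
    · exact congrArg f (Fin.ext (by simp [e2]))

lemma mconn_transfer {S S' : Set Pt} {p q : Pt} (h : MConnected S p q)
    (hsub : ∀ z, z ∈ S → z ∈ Rect p q → z ∈ S') : MConnected S' p q := by
  obtain ⟨k, F, hp⟩ := npath_of_mconn h
  have h0 := hp.1
  have hk := hp.2.1
  refine mconn_of_npath (S := S') ⟨hp.1, hp.2.1, fun i hi => ?_, hp.2.2.2.1, hp.2.2.2.2⟩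
  have hb : F i ∈ Rect (F 0) (F k) := npath_between hp (Nat.zero_le i) hi le_rfl
  rw [h0, hk] at hb
  exact hsub _ (hp.2.2.1 i hi) hb

lemma mconn_extend {S : Set Pt} {p u r : Pt} (h : MConnected S p u)
    (hr : r ∈ S) (hal : Aligned u r) (hrect : u ∈ Rect p r) : MConnected S p r := by
  obtain ⟨k, F, h0, hk, hmem, haled, hsum⟩ := npath_of_mconn h
  set G : ℕ → Pt := fun i => if i ≤ k then F i else r with hG
  refine mconn_of_npath (S := S) (k := k+1) (F := G) ?_
  have hGk : G k = u := by simp [hG, hk]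
  have hGk1 : G (k+1) = r := by simp [hG]
  refine ⟨by simp [hG, h0], hGk1, ?_, ?_, ?_⟩
  · intro i hi
    by_cases hik : i ≤ k
    · simpa [hG, hik] using hmem i hik
    · simpa [hG, hik] using hr
  · intro i hi
    by_cases hik : i < k
    · have e1 : i ≤ k := by omega
      have e2 : i + 1 ≤ k := by omega
      simpa [hG, e1, e2] using haled i hik
    · have : i = k := by omega
      subst this
      simpa [hG, hk] using hal
  · rw [Finset.sum_range_succ]
    have e : ∀ i ∈ Finset.range k, dist1 (G i) (G (i+1)) = dist1 (F i) (F (i+1)) := by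
      intro i hi
      simp only [Finset.mem_range] at hi
      have e1 : i ≤ k := by omega
      have e2 : i + 1 ≤ k := by omega
      simp [hG, e1, e2]
    rw [Finset.sum_congr rfl e, hsum, hGk, hGk1]
    exact dist1_add_of_mem_rect hrect

lemma mconn_avoid {S : Set Pt} {p q v : Pt} {k : ℕ} {F : ℕ → Pt}
    (h : NPath S p q k F) (hv : ∀ i, i ≤ k → F i ≠ v) : MConnected (S \ {v}) p q := by
  refine mconn_of_npath (S := S \ {v}) ⟨h.1, h.2.1, fun i hi => ?_, h.2.2.2.1, h.2.2.2.2⟩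
  exact ⟨h.2.2.1 i hi, by simpa using hv i hi⟩

/-- minimal paths -/
lemma exists_min_npath {S : Set Pt} {p q : Pt} (h : MConnected S p q) :
    ∃ k F, NPath S p q k F ∧ ∀ k' F', NPath S p q k' F' → k ≤ k' := by
  have hex : ∃ k, ∃ F, NPath S p q k F := npath_of_mconn h
  classical
  obtain ⟨F, hF⟩ := Nat.find_spec hex
  exact ⟨Nat.find hex, F, hF, fun k' F' h' => Nat.find_le ⟨F', h'⟩⟩

end Stmt12
namespace Stmt12

lemma sum_Ico_shift (f : ℕ → ℝ) (a b c : ℕ) :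
    ∑ m ∈ Finset.Ico a b, f (m + c) = ∑ m ∈ Finset.Ico (a+c) (b+c), f m := by
  rw [Finset.sum_Ico_eq_sum_range, Finset.sum_Ico_eq_sum_range]
  have e : b + c - (a + c) = b - a := by omega
  rw [e]
  apply Finset.sum_congr rfl
  intro i _
  congr 1
  omega

lemma min_npath_ne {S : Set Pt} {p q : Pt} {k : ℕ} {F : ℕ → Pt}
    (hp : NPath S p q k F) (hmin : ∀ k' F', NPath S p q k' F' → k ≤ k')
    {a b : ℕ} (hab : a < b) (hbk : b ≤ k) : F a ≠ F b := by
  intro heq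
  obtain ⟨h0, hk, hmem, hal, hsum⟩ := hp
  set K' := k - (b - a) with hK'
  have haK : a ≤ K' := by omega
  set G : ℕ → Pt := fun m => if m ≤ a then F m else F (m + (b - a)) with hG
  have hGlo : ∀ m, m ≤ a → G m = F m := fun m hm => by simp [hG, hm]
  have hGhi : ∀ m, a ≤ m → G m = F (m + (b - a)) := by
    intro m hm
    by_cases h : m ≤ a
    · have hma : m = a := le_antisymm h hm
      have e : m + (b - a) = b := by omega
      rw [e]
      simp only [hG]
      rw [if_pos h, hma, heq]
    · simp [hG, h]
  have hnp : NPath S p q K' G := by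
    apply npath_of_sum_le
    · rw [hGlo 0 (Nat.zero_le a)]; exact h0
    · rw [hGhi K' haK]
      have e : K' + (b - a) = k := by omega
      rw [e]; exact hk
    · intro i hi
      by_cases h : i ≤ a
      · rw [hGlo i h]; exact hmem i (by omega)
      · rw [hGhi i (by omega)]; exact hmem _ (by omega)
    · intro i hi
      by_cases h : i < a
      · rw [hGlo i (by omega), hGlo (i+1) (by omega)]
        exact hal i (by omega)
      · rw [hGhi i (by omega), hGhi (i+1) (by omega)]
        have e : i + 1 + (b - a) = i + (b - a) + 1 := by omega
        rw [e]
        exact hal _ (by omega)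
    · -- sum bound
      have hsplit : ∑ m ∈ Finset.range K', dist1 (G m) (G (m+1))
          = ∑ m ∈ Finset.Ico 0 a, dist1 (G m) (G (m+1))
            + ∑ m ∈ Finset.Ico a K', dist1 (G m) (G (m+1)) := by
        rw [Finset.range_eq_Ico, ← Finset.sum_Ico_consecutive _ (Nat.zero_le a) haK]
      have e1 : ∑ m ∈ Finset.Ico 0 a, dist1 (G m) (G (m+1))
          = ∑ m ∈ Finset.Ico 0 a, dist1 (F m) (F (m+1)) := by
        apply Finset.sum_congr rfl
        intro m hm
        simp only [Finset.mem_Ico] at hm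
        rw [hGlo m (by omega), hGlo (m+1) (by omega)]
      have e2 : ∑ m ∈ Finset.Ico a K', dist1 (G m) (G (m+1))
          = ∑ m ∈ Finset.Ico b k, dist1 (F m) (F (m+1)) := by
        have e2a : ∀ m ∈ Finset.Ico a K', dist1 (G m) (G (m+1))
            = (fun m => dist1 (F m) (F (m+1))) (m + (b - a)) := by
          intro m hm
          simp only [Finset.mem_Ico] at hm
          rw [hGhi m (by omega), hGhi (m+1) (by omega)]
          have e : m + 1 + (b - a) = m + (b - a) + 1 := by omega
          rw [e]
        rw [Finset.sum_congr rfl e2a,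
          sum_Ico_shift (fun m => dist1 (F m) (F (m+1))) a K' (b - a)]
        have ea : a + (b - a) = b := by omega
        have eb : K' + (b - a) = k := by omega
        rw [ea, eb]
      have hfull : ∑ m ∈ Finset.range k, dist1 (F m) (F (m+1))
          = ∑ m ∈ Finset.Ico 0 a, dist1 (F m) (F (m+1))
            + ∑ m ∈ Finset.Ico a b, dist1 (F m) (F (m+1))
            + ∑ m ∈ Finset.Ico b k, dist1 (F m) (F (m+1)) := by
        rw [Finset.range_eq_Ico, ← Finset.sum_Ico_consecutive _ (Nat.zero_le b) hbk,
          ← Finset.sum_Ico_consecutive _ (Nat.zero_le a) (le_of_lt hab)]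
      have hnn : 0 ≤ ∑ m ∈ Finset.Ico a b, dist1 (F m) (F (m+1)) :=
        Finset.sum_nonneg fun m _ => dist1_nonneg _ _
      rw [hsplit, e1, e2]
      rw [hfull] at hsum
      linarith
  have := hmin K' G hnp
  omega

lemma min_npath_inj {S : Set Pt} {p q : Pt} {k : ℕ} {F : ℕ → Pt}
    (hp : NPath S p q k F) (hmin : ∀ k' F', NPath S p q k' F' → k ≤ k')
    {a b : ℕ} (hak : a ≤ k) (hbk : b ≤ k) (heq : F a = F b) : a = b := by
  rcases lt_trichotomy a b with h | h | h
  · exact absurd heq (min_npath_ne hp hmin h hbk)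
  · exact h
  · exact absurd heq.symm (min_npath_ne hp hmin h hak)

lemma min_npath_no_shortcut {S : Set Pt} {p q : Pt} {k : ℕ} {F : ℕ → Pt}
    (hp : NPath S p q k F) (hmin : ∀ k' F', NPath S p q k' F' → k ≤ k')
    {j : ℕ} (hj : j + 2 ≤ k) (hal2 : Aligned (F j) (F (j+2))) : False := by
  obtain ⟨h0, hk, hmem, hal, hsum⟩ := hp
  set K' := k - 1 with hK'
  set G : ℕ → Pt := fun m => if m ≤ j then F m else F (m+1) with hG
  have hGlo : ∀ m, m ≤ j → G m = F m := fun m hm => by simp [hG, hm]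
  have hGhi : ∀ m, j < m → G m = F (m+1) := by
    intro m hm
    have : ¬ m ≤ j := by omega
    simp [hG, this]
  have hnp : NPath S p q K' G := by
    apply npath_of_sum_le
    · rw [hGlo 0 (Nat.zero_le j)]; exact h0
    · rw [hGhi K' (by omega)]
      have e : K' + 1 = k := by omega
      rw [e]; exact hk
    · intro i hi
      by_cases h : i ≤ j
      · rw [hGlo i h]; exact hmem i (by omega)
      · rw [hGhi i (by omega)]; exact hmem _ (by omega)
    · intro i hi
      rcases lt_trichotomy i j with h | h | h
      · rw [hGlo i (by omega), hGlo (i+1) (by omega)]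
        exact hal i (by omega)
      · subst h
        rw [hGlo i le_rfl, hGhi (i+1) (by omega)]
        exact hal2
      · rw [hGhi i h, hGhi (i+1) (by omega)]
        exact hal (i+1) (by omega)
    · have hsplit : ∑ m ∈ Finset.range K', dist1 (G m) (G (m+1))
          = ∑ m ∈ Finset.Ico 0 j, dist1 (G m) (G (m+1))
            + ∑ m ∈ Finset.Ico j (j+1), dist1 (G m) (G (m+1))
            + ∑ m ∈ Finset.Ico (j+1) K', dist1 (G m) (G (m+1)) := by
        rw [Finset.range_eq_Ico, ← Finset.sum_Ico_consecutive _ (by omega : 0 ≤ j+1) (by omega : j+1 ≤ K'),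
          ← Finset.sum_Ico_consecutive _ (Nat.zero_le j) (by omega : j ≤ j+1)]
      have e1 : ∑ m ∈ Finset.Ico 0 j, dist1 (G m) (G (m+1))
          = ∑ m ∈ Finset.Ico 0 j, dist1 (F m) (F (m+1)) := by
        apply Finset.sum_congr rfl
        intro m hm
        simp only [Finset.mem_Ico] at hm
        rw [hGlo m (by omega), hGlo (m+1) (by omega)]
      have e2 : ∑ m ∈ Finset.Ico j (j+1), dist1 (G m) (G (m+1))
          = dist1 (F j) (F (j+2)) := by
        rw [Finset.sum_Ico_eq_sum_range]
        simp only [Nat.add_sub_cancel_left, Finset.sum_range_one, Nat.add_zero]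
        rw [hGlo j le_rfl, hGhi (j+1) (by omega)]
      have e3 : ∑ m ∈ Finset.Ico (j+1) K', dist1 (G m) (G (m+1))
          = ∑ m ∈ Finset.Ico (j+2) k, dist1 (F m) (F (m+1)) := by
        have e3a : ∀ m ∈ Finset.Ico (j+1) K', dist1 (G m) (G (m+1))
            = (fun m => dist1 (F m) (F (m+1))) (m + 1) := by
          intro m hm
          simp only [Finset.mem_Ico] at hm
          rw [hGhi m (by omega), hGhi (m+1) (by omega)]
        rw [Finset.sum_congr rfl e3a,
          sum_Ico_shift (fun m => dist1 (F m) (F (m+1))) (j+1) K' 1]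
        have e : K' + 1 = k := by omega
        rw [e]
      have hfull : ∑ m ∈ Finset.range k, dist1 (F m) (F (m+1))
          = ∑ m ∈ Finset.Ico 0 j, dist1 (F m) (F (m+1))
            + (dist1 (F j) (F (j+1)) + dist1 (F (j+1)) (F (j+2)))
            + ∑ m ∈ Finset.Ico (j+2) k, dist1 (F m) (F (m+1)) := by
        rw [Finset.range_eq_Ico, ← Finset.sum_Ico_consecutive _ (by omega : 0 ≤ j+2) (by omega : j+2 ≤ k),
          ← Finset.sum_Ico_consecutive _ (Nat.zero_le j) (by omega : j ≤ j+2)]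
        congr 1
        congr 1
        rw [show j + 2 = (j+1)+1 from rfl, Finset.sum_Ico_succ_top (by omega : j ≤ j+1),
          Finset.sum_Ico_succ_top (by omega : j ≤ j)]
        simp
      have htri := dist1_triangle (F j) (F (j+1)) (F (j+2))
      rw [hsplit, e1, e2, e3]
      rw [hfull] at hsum
      linarith
  have := hmin K' G hnp
  omega

end Stmt12
namespace Stmt12

def Amb (p0 : Pt) (D Q : Finset Pt) : Set Pt := insert p0 (↑D ∪ ↑Q)

def Tri (p0 : Pt) (D : Finset Pt) : Prop :=
  (∀ d ∈ D, p0.1 < d.1 ∧ p0.2 < d.2) ∧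
  (∀ d ∈ D, ∀ e ∈ D, (d.1 < e.1 ↔ e.2 < d.2)) ∧
  (∀ d ∈ D, ∀ e ∈ D, d.1 = e.1 → d = e) ∧
  (∀ d ∈ D, ∀ e ∈ D, d.2 = e.2 → d = e)

def Feas (p0 : Pt) (D Q : Finset Pt) : Prop := ∀ d ∈ D, MConnected (Amb p0 D Q) p0 d

def Grd (p0 : Pt) (D : Finset Pt) : Set Pt :=
  {z | (z.1 = p0.1 ∨ ∃ d ∈ D, z.1 = d.1) ∧ (z.2 = p0.2 ∨ ∃ d ∈ D, z.2 = d.2) ∧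
    ∃ d ∈ D, z ∈ Rect p0 d}

lemma mem_rect_iff {p0 b z : Pt} (h1 : p0.1 ≤ b.1) (h2 : p0.2 ≤ b.2) :
    z ∈ Rect p0 b ↔ p0.1 ≤ z.1 ∧ z.1 ≤ b.1 ∧ p0.2 ≤ z.2 ∧ z.2 ≤ b.2 := by
  unfold Rect
  rw [Set.mem_setOf_eq, min_eq_left h1, max_eq_right h1, min_eq_left h2, max_eq_right h2]

lemma mem_amb {p0 : Pt} {D Q : Finset Pt} {z : Pt} :
    z ∈ Amb p0 D Q ↔ z = p0 ∨ z ∈ D ∨ z ∈ Q := by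
  simp [Amb]

lemma tri_rect_unique {p0 : Pt} {D : Finset Pt} (ht : Tri p0 D) {d e : Pt}
    (hd : d ∈ D) (he : e ∈ D) (hr : e ∈ Rect p0 d) : e = d := by
  obtain ⟨hx1, hx2, hy1, hy2⟩ := (mem_rect_iff (le_of_lt (ht.1 d hd).1)
    (le_of_lt (ht.1 d hd).2)).1 hr
  by_contra hne
  have h1 : e.1 ≠ d.1 := fun h => hne (ht.2.2.1 e he d hd h)
  have h2 : e.1 < d.1 := lt_of_le_of_ne hx2 h1
  have := (ht.2.1 e he d hd).1 h2
  linarith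

lemma killed_struct {p0 : Pt} {D Q : Finset Pt} (ht : Tri p0 D) {d v : Pt}
    (hd : d ∈ D) (hfd : MConnected (Amb p0 D Q) p0 d)
    (hvQ : v ∈ Q) (hvP : v ≠ p0) (hvD : v ∉ D)
    (hmax : ∀ z ∈ Q, z.1 < v.1 ∨ (z.1 = v.1 ∧ z.2 ≤ v.2))
    (hkill : ¬ MConnected (Amb p0 D Q \ {v}) p0 d) :
    (v.1 = d.1 ∧ v.2 < d.2 ∧ v ∈ Rect p0 d ∧
      (v.2 = p0.2 ∨ ∃ u ∈ Q, u.2 = v.2 ∧ u.1 < v.1 ∧ u ∈ Rect p0 v ∧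
        MConnected (Amb p0 D Q \ {v}) p0 u)) ∨
    (v.2 = d.2 ∧ v.1 < d.1 ∧ v ∈ Rect p0 d ∧
      (v.1 = p0.1 ∨ ∃ u ∈ Q, u.1 = v.1 ∧ u.2 < v.2 ∧ u ∈ Rect p0 v ∧
        MConnected (Amb p0 D Q \ {v}) p0 u)) := by
  obtain ⟨k, F, hp, hmin⟩ := exists_min_npath hfd
  have h0 : F 0 = p0 := hp.1
  have hk : F k = d := hp.2.1
  have hmem : ∀ i, i ≤ k → F i ∈ Amb p0 D Q := hp.2.2.1
  have hal : ∀ i, i < k → Aligned (F i) (F (i+1)) := hp.2.2.2.1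
  have ht1d := ht.1 d hd
  -- v lies on the path
  have hvon : ∃ i, i ≤ k ∧ F i = v := by
    by_contra hc
    push_neg at hc
    exact hkill (mconn_avoid hp (fun i hi => hc i hi))
  obtain ⟨i, hik, hiv⟩ := hvon
  have hi0 : 0 < i := by
    rcases Nat.eq_zero_or_pos i with h | h
    · exfalso; apply hvP; rw [← hiv, h, h0]
    · exact h
  have hikk : i < k := by
    rcases Nat.lt_or_ge i k with h | h
    · exact h
    · exfalso; apply hvD
      have : i = k := by omega
      rw [← hiv, this, hk]; exact hd
  have hrect_v : v ∈ Rect p0 d := by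
    have := npath_between hp (Nat.zero_le i) (le_of_lt hikk) le_rfl
    rwa [h0, hk, hiv] at this
  obtain ⟨hv1l, hv1u, hv2l, hv2u⟩ :=
    (mem_rect_iff (le_of_lt ht1d.1) (le_of_lt ht1d.2)).1 hrect_v
  -- successor is d
  have hzrect : F (i+1) ∈ Rect p0 d := by
    have := npath_between hp (Nat.zero_le (i+1)) hikk le_rfl
    rwa [h0, hk] at this
  obtain ⟨hz1l, hz1u, hz2l, hz2u⟩ :=
    (mem_rect_iff (le_of_lt ht1d.1) (le_of_lt ht1d.2)).1 hzrect
  have hvz : v ∈ Rect p0 (F (i+1)) := by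
    have := npath_between hp (Nat.zero_le i) (Nat.le_succ i) hikk
    rwa [h0, hiv] at this
  obtain ⟨_, hvz1, _, hvz2⟩ := (mem_rect_iff hz1l hz2l).1 hvz
  have hzne : F (i+1) ≠ v := by
    rw [← hiv]
    exact (min_npath_ne hp hmin (Nat.lt_succ_self i) hikk).symm
  have hzd : F (i+1) = d := by
    rcases mem_amb.1 (hmem (i+1) hikk) with h | h | h
    · exfalso
      apply hzne
      have e1 : (F (i+1)).1 = v.1 := le_antisymm (by rw [h]; exact hv1l) hvz1
      have e2 : (F (i+1)).2 = v.2 := le_antisymm (by rw [h]; exact hv2l) hvz2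
      exact Prod.ext e1 e2
    · exact tri_rect_unique ht hd h hzrect
    · exfalso
      rcases hmax _ h with hlt | ⟨he1, he2⟩
      · linarith
      · exact hzne (Prod.ext he1 (le_antisymm he2 hvz2))
  have halvd : Aligned v d := by
    have := hal i hikk
    rwa [hiv, hzd] at this
  -- predecessor
  have hpred : Aligned (F (i-1)) v := by
    have := hal (i-1) (by omega)
    have e : i - 1 + 1 = i := by omega
    rwa [e, hiv] at this
  have hpredne : F (i-1) ≠ v := by
    rw [← hiv]
    exact min_npath_ne hp hmin (by omega : i - 1 < i) hik
  have hprerect : F (i-1) ∈ Rect p0 v := by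
    have := npath_between hp (Nat.zero_le (i-1)) (by omega : i - 1 ≤ i) hik
    rwa [h0, hiv] at this
  obtain ⟨hu1l, hu1u, hu2l, hu2u⟩ := (mem_rect_iff hv1l hv2l).1 hprerect
  have hpremc : MConnected (Amb p0 D Q \ {v}) p0 (F (i-1)) := by
    have hpre := npath_prefix hp (by omega : i - 1 ≤ k)
    apply mconn_avoid hpre
    intro m hm
    rw [← hiv]
    intro hcon
    have := min_npath_inj hp hmin (by omega : m ≤ k) hik hcon
    omega
  rcases halvd with hvx | hvy
  · -- vertical case : v.1 = d.1
    left
    have hv2lt : v.2 < d.2 := by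
      rcases lt_or_eq_of_le hv2u with h | h
      · exact h
      · exfalso; exact hvD (by rw [show v = d from Prod.ext hvx h]; exact hd)
    refine ⟨hvx, hv2lt, hrect_v, ?_⟩
    have hux : (F (i-1)).1 ≠ v.1 := by
      intro hcon
      apply min_npath_no_shortcut hp hmin (j := i-1) (by omega : i - 1 + 2 ≤ k)
      have e : i - 1 + 2 = i + 1 := by omega
      rw [e, hzd]
      exact Or.inl (by rw [hcon, hvx])
    have huy : (F (i-1)).2 = v.2 := by
      rcases hpred with h | h
      · exact absurd h hux
      · exact h
    have hu1lt : (F (i-1)).1 < v.1 := lt_of_le_of_ne hu1u hux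
    rcases mem_amb.1 (hmem (i-1) (by omega)) with h | h | h
    · left; rw [← huy, h]
    · exfalso
      have hrd : F (i-1) ∈ Rect p0 d := by
        rw [mem_rect_iff (le_of_lt ht1d.1) (le_of_lt ht1d.2)]
        refine ⟨hu1l, ?_, hu2l, by linarith⟩
        rw [← hvx]
        linarith
      have hud := tri_rect_unique ht hd h hrd
      rw [hud] at huy
      linarith
    · right
      exact ⟨F (i-1), h, huy, hu1lt, hprerect, hpremc⟩
  · -- horizontal case : v.2 = d.2
    right
    have hv1lt : v.1 < d.1 := by
      rcases lt_or_eq_of_le hv1u with h | h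
      · exact h
      · exfalso; exact hvD (by rw [show v = d from Prod.ext h hvy]; exact hd)
    refine ⟨hvy, hv1lt, hrect_v, ?_⟩
    have huy' : (F (i-1)).2 ≠ v.2 := by
      intro hcon
      apply min_npath_no_shortcut hp hmin (j := i-1) (by omega : i - 1 + 2 ≤ k)
      have e : i - 1 + 2 = i + 1 := by omega
      rw [e, hzd]
      exact Or.inr (by rw [hcon, hvy])
    have hux' : (F (i-1)).1 = v.1 := by
      rcases hpred with h | h
      · exact h
      · exact absurd h huy'
    have hu2lt : (F (i-1)).2 < v.2 := lt_of_le_of_ne hu2u huy'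
    rcases mem_amb.1 (hmem (i-1) (by omega)) with h | h | h
    · left; rw [← hux', h]
    · exfalso
      have hrd : F (i-1) ∈ Rect p0 d := by
        rw [mem_rect_iff (le_of_lt ht1d.1) (le_of_lt ht1d.2)]
        refine ⟨hu1l, by linarith, hu2l, ?_⟩
        rw [← hvy]
        linarith
      have hud := tri_rect_unique ht hd h hrd
      rw [hud] at hux'
      linarith
    · right
      exact ⟨F (i-1), h, hux', hu2lt, hprerect, hpremc⟩

end Stmt12
namespace Stmt12

lemma tri_erase {p0 : Pt} {D : Finset Pt} (ht : Tri p0 D) (d0 : Pt) : Tri p0 (D.erase d0) :=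
  ⟨fun d hd => ht.1 d (Finset.mem_of_mem_erase hd),
   fun d hd e he => ht.2.1 d (Finset.mem_of_mem_erase hd) e (Finset.mem_of_mem_erase he),
   fun d hd e he => ht.2.2.1 d (Finset.mem_of_mem_erase hd) e (Finset.mem_of_mem_erase he),
   fun d hd e he => ht.2.2.2 d (Finset.mem_of_mem_erase hd) e (Finset.mem_of_mem_erase he)⟩

lemma grd_mono {p0 : Pt} {D D' : Finset Pt} (h : D' ⊆ D) : Grd p0 D' ⊆ Grd p0 D := by
  intro z hz
  obtain ⟨h1, h2, d, hd, h3⟩ := hz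
  refine ⟨?_, ?_, d, h hd, h3⟩
  · rcases h1 with h1 | ⟨e, he, h1⟩
    · exact Or.inl h1
    · exact Or.inr ⟨e, h he, h1⟩
  · rcases h2 with h2 | ⟨e, he, h2⟩
    · exact Or.inl h2
    · exact Or.inr ⟨e, h he, h2⟩

lemma transfer_erase {p0 : Pt} {D Q : Finset Pt} (ht : Tri p0 D) {d0 e : Pt}
    (he : e ∈ D) (hne : e ≠ d0) {Q' : Finset Pt} {S : Set Pt}
    (hmc : MConnected S p0 e)
    (hSQ : ∀ z, z ∈ S → z ∈ Rect p0 e → z ∈ Q → z ∈ Q')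
    (hSamb : S ⊆ Amb p0 D Q) :
    MConnected (Amb p0 (D.erase d0) Q') p0 e := by
  apply mconn_transfer hmc
  intro z hzS hzr
  rcases mem_amb.1 (hSamb hzS) with h | h | h
  · exact mem_amb.2 (Or.inl h)
  · have hz : z = e := tri_rect_unique ht he h hzr
    subst hz
    exact mem_amb.2 (Or.inr (Or.inl (Finset.mem_erase.2 ⟨hne, he⟩)))
  · exact mem_amb.2 (Or.inr (Or.inr (hSQ z hzS hzr h)))

lemma exists_entry {p0 : Pt} {D Q : Finset Pt} (ht : Tri p0 D) {d : Pt} (hd : d ∈ D)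
    (hmc : MConnected (Amb p0 D Q) p0 d) :
    ∃ w ∈ Q, w ∈ Rect p0 d ∧ (w.1 = d.1 ∨ w.2 = d.2) := by
  obtain ⟨k, F, hp, hmin⟩ := exists_min_npath hmc
  have h0 : F 0 = p0 := hp.1
  have hk : F k = d := hp.2.1
  have ht1 := ht.1 d hd
  have hk2 : 2 ≤ k := by
    by_contra hc
    interval_cases k
    · rw [← h0, hk] at ht1; exact lt_irrefl _ ht1.1
    · have := hp.2.2.2.1 0 (by omega)
      rw [h0, hk] at this
      rcases this with h | h
      · exact absurd h (ne_of_lt ht1.1)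
      · exact absurd h (ne_of_lt ht1.2)
  have hwrect : F (k-1) ∈ Rect p0 d := by
    have := npath_between hp (Nat.zero_le (k-1)) (by omega : k - 1 ≤ k) le_rfl
    rwa [h0, hk] at this
  have hwal : (F (k-1)).1 = d.1 ∨ (F (k-1)).2 = d.2 := by
    have := hp.2.2.2.1 (k-1) (by omega)
    have e : k - 1 + 1 = k := by omega
    rw [e, hk] at this
    exact this
  have hwp0 : F (k-1) ≠ p0 := by
    rw [← h0]
    exact fun h => by
      have := min_npath_inj hp hmin (by omega : k - 1 ≤ k) (Nat.zero_le k) h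
      omega
  have hwd : F (k-1) ≠ d := by
    rw [← hk]
    exact min_npath_ne hp hmin (by omega : k - 1 < k) le_rfl
  rcases mem_amb.1 (hp.2.2.1 (k-1) (by omega)) with h | h | h
  · exact absurd h hwp0
  · exact absurd (tri_rect_unique ht hd h hwrect) hwd
  · exact ⟨F (k-1), h, hwrect, hwal⟩

lemma exists_lexmax {Q : Finset Pt} (h : Q.Nonempty) :
    ∃ v ∈ Q, ∀ z ∈ Q, z.1 < v.1 ∨ (z.1 = v.1 ∧ z.2 ≤ v.2) := by
  obtain ⟨w, hw, hwmax⟩ := Q.exists_max_image (fun z => z.1) h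
  have hne : (Q.filter (fun z => z.1 = w.1)).Nonempty := ⟨w, Finset.mem_filter.2 ⟨hw, rfl⟩⟩
  obtain ⟨v, hv, hvmax⟩ := (Q.filter (fun z => z.1 = w.1)).exists_max_image (fun z => z.2) hne
  obtain ⟨hvQ, hv1⟩ := Finset.mem_filter.1 hv
  refine ⟨v, hvQ, fun z hz => ?_⟩
  rcases lt_or_eq_of_le (hwmax z hz) with h1 | h1
  · left; rw [hv1]; exact h1
  · right
    refine ⟨by rw [hv1, h1], ?_⟩
    exact hvmax z (Finset.mem_filter.2 ⟨hz, h1⟩)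

end Stmt12
namespace Stmt12

theorem main_ab : ∀ m : ℕ,
    (∀ (p0 : Pt) (D Q : Finset Pt), Tri p0 D → Feas p0 D Q → D.card = m → m ≤ Q.card) ∧
    (∀ (p0 : Pt) (D Q : Finset Pt), Tri p0 D → Feas p0 D Q → D.card = m → Q.card = m →
      ↑Q ⊆ Grd p0 D) := by
  intro m
  induction m using Nat.strong_induction_on with
  | _ m IH =>
  have ha : ∀ (p0 : Pt) (D Q : Finset Pt), Tri p0 D → Feas p0 D Q → D.card = m →
      m ≤ Q.card := by
    intro p0 D Q ht hfeas hcard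
    rcases Nat.eq_zero_or_pos m with hm | hm
    · omega
    · have hDne : D.Nonempty := Finset.card_pos.1 (by omega)
      obtain ⟨d1, hd1, hd1max'⟩ := Finset.exists_max_image D (fun d => d.2) hDne
      have hd1max : ∀ e ∈ D, e ≠ d1 → e.2 < d1.2 := by
        intro e he hne
        rcases lt_or_eq_of_le (hd1max' e he) with h | h
        · exact h
        · exact absurd (ht.2.2.2 e he d1 hd1 h) hne
      obtain ⟨w, hwQ, hwrect, hwal⟩ := exists_entry ht hd1 (hfeas d1 hd1)
      by_cases hA : ∃ q ∈ Q, ∀ e ∈ D.erase d1, q ∉ Rect p0 e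
      · obtain ⟨q, hqQ, hq⟩ := hA
        have hfeas' : Feas p0 (D.erase d1) (Q.erase q) := by
          intro e he
          have he' := Finset.mem_of_mem_erase he
          have hne := (Finset.mem_erase.1 he).1
          exact transfer_erase ht he' hne (hfeas e he')
            (fun z hzS hzr hzQ => Finset.mem_erase.2
              ⟨fun hzq => hq e he (hzq ▸ hzr), hzQ⟩)
            (fun z hz => hz)
        have hle := (IH (m-1) (by omega)).1 p0 (D.erase d1) (Q.erase q)
          (tri_erase ht d1) hfeas'
          (by rw [Finset.card_erase_of_mem hd1, hcard])
        have hq1 : 1 ≤ Q.card := Finset.card_pos.2 ⟨q, hqQ⟩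
        rw [Finset.card_erase_of_mem hqQ] at hle
        omega
      · push_neg at hA
        have hfeas' : Feas p0 (D.erase d1) Q := by
          intro e he
          have he' := Finset.mem_of_mem_erase he
          have hne := (Finset.mem_erase.1 he).1
          exact transfer_erase ht he' hne (hfeas e he')
            (fun z _ _ hzQ => hzQ) (fun z hz => hz)
        have hge := (IH (m-1) (by omega)).1 p0 (D.erase d1) Q (tri_erase ht d1) hfeas'
          (by rw [Finset.card_erase_of_mem hd1, hcard])
        obtain ⟨e, he, hwe⟩ := hA w hwQ
        have he' := Finset.mem_of_mem_erase he
        have hned1 := (Finset.mem_erase.1 he).1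
        have hwx : w.1 = d1.1 := by
          rcases hwal with h | h
          · exact h
          · exfalso
            obtain ⟨_, _, _, h4⟩ := (mem_rect_iff (le_of_lt (ht.1 e he').1)
              (le_of_lt (ht.1 e he').2)).1 hwe
            have := hd1max e he' hned1
            rw [h] at h4
            linarith
        by_contra hlt
        push_neg at hlt
        have hvcard : Q.card = m - 1 := by omega
        have hsubs := (IH (m-1) (by omega)).2 p0 (D.erase d1) Q (tri_erase ht d1) hfeas'
          (by rw [Finset.card_erase_of_mem hd1, hcard]) hvcard
        have hwg := hsubs (Finset.mem_coe.2 hwQ)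
        obtain ⟨hgx, _, _⟩ := hwg
        rcases hgx with h | ⟨e2, he2, h⟩
        · rw [hwx] at h; exact absurd h (ne_of_gt (ht.1 d1 hd1).1)
        · rw [hwx] at h
          have heq := ht.2.2.1 d1 hd1 e2 (Finset.mem_of_mem_erase he2) h
          exact (Finset.mem_erase.1 he2).1 heq.symm
  refine ⟨ha, ?_⟩
  intro p0 D Q ht hfeas hcard hqcard
  rcases Nat.eq_zero_or_pos m with hm | hm
  · have : Q = ∅ := Finset.card_eq_zero.1 (by omega)
    subst this
    simp
  -- tightness
  have htight : ∀ v ∈ Q, v ≠ p0 ∧ v ∉ D ∧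
      ∃ d ∈ D, ¬ MConnected (Amb p0 D Q \ {v}) p0 d := by
    intro v hv
    have hkill : ∃ d ∈ D, ¬ MConnected (Amb p0 D (Q.erase v)) p0 d := by
      by_contra hc
      push_neg at hc
      have := ha p0 D (Q.erase v) ht hc hcard
      rw [Finset.card_erase_of_mem hv] at this
      omega
    obtain ⟨d, hd, hkd⟩ := hkill
    have hvPD : v ≠ p0 ∧ v ∉ D := by
      by_contra hc
      apply hkd
      apply mconn_transfer (hfeas d hd)
      intro z hz _
      rcases mem_amb.1 hz with h1 | h1 | h1
      · exact mem_amb.2 (Or.inl h1)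
      · exact mem_amb.2 (Or.inr (Or.inl h1))
      · by_cases hzv : z = v
        · subst hzv
          rcases not_and_or.1 hc with h | h
          · exact mem_amb.2 (Or.inl (not_not.1 h))
          · exact mem_amb.2 (Or.inr (Or.inl (not_not.1 h)))
        · exact mem_amb.2 (Or.inr (Or.inr (Finset.mem_erase.2 ⟨hzv, h1⟩)))
    have hamb : Amb p0 D (Q.erase v) = Amb p0 D Q \ {v} := by
      ext z
      simp only [mem_amb, Set.mem_diff, Set.mem_singleton_iff, Finset.mem_erase]
      constructor
      · rintro (h | h | ⟨h1, h2⟩)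
        · exact ⟨Or.inl h, by rw [h]; exact fun hc => hvPD.1 hc.symm⟩
        · exact ⟨Or.inr (Or.inl h), fun hc => hvPD.2 (hc ▸ h)⟩
        · exact ⟨Or.inr (Or.inr h2), h1⟩
      · rintro ⟨h | h | h, h2⟩
        · exact Or.inl h
        · exact Or.inr (Or.inl h)
        · exact Or.inr (Or.inr ⟨h2, h⟩)
      
    exact ⟨hvPD.1, hvPD.2, d, hd, by rwa [hamb] at hkd⟩
  -- lex-maximal point
  have hQne : Q.Nonempty := Finset.card_pos.1 (by omega)
  obtain ⟨v, hvQ, hvmax⟩ := exists_lexmax hQne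
  obtain ⟨hvP, hvD, d0, hd0, hkd0⟩ := htight v hvQ
  -- uniqueness of the killed demand
  have huniq : ∀ d ∈ D, ¬ MConnected (Amb p0 D Q \ {v}) p0 d → d = d0 := by
    intro d hd hkd
    by_contra hne
    have o1 := killed_struct ht hd (hfeas d hd) hvQ hvP hvD hvmax hkd
    have o2 := killed_struct ht hd0 (hfeas d0 hd0) hvQ hvP hvD hvmax hkd0
    have hdS : ∀ e, e ∈ D → (e : Pt) ∈ Amb p0 D Q \ {v} := by
      intro e heD
      exact ⟨mem_amb.2 (Or.inr (Or.inl heD)), fun hc => hvD (by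
        simp only [Set.mem_singleton_iff] at hc
        rw [← hc]; exact heD)⟩
    rcases o1 with ⟨h1x, h1lt, h1r, h1u⟩ | ⟨h1y, h1lt, h1r, h1u⟩ <;>
      rcases o2 with ⟨h2x, h2lt, h2r, h2u⟩ | ⟨h2y, h2lt, h2r, h2u⟩
    · exact hne (ht.2.2.1 d hd d0 hd0 (by rw [← h1x, ← h2x]))
    · -- o1 vertical (v.1 = d.1), o2 horizontal (v.2 = d0.2)
      obtain ⟨hv1l, hv1u, hv2l, hv2u⟩ := (mem_rect_iff (le_of_lt (ht.1 d hd).1)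
        (le_of_lt (ht.1 d hd).2)).1 h1r
      rcases h2u with h | ⟨u, huQ, hu1, hu2, hur, humc⟩
      · have := (ht.1 d hd).1
        rw [← h1x, h] at this
        exact lt_irrefl _ this
      · apply hkd
        obtain ⟨hw1, hw2, hw3, hw4⟩ := (mem_rect_iff hv1l hv2l).1 hur
        apply mconn_extend humc (hdS d hd) (Or.inl (hu1.trans h1x))
        rw [mem_rect_iff (le_of_lt (ht.1 d hd).1) (le_of_lt (ht.1 d hd).2)]
        refine ⟨hw1, ?_, hw3, ?_⟩
        · rw [hu1, h1x]
        · linarith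
    · -- o1 horizontal (v.2 = d.2), o2 vertical (v.1 = d0.1)
      obtain ⟨hv1l, hv1u, hv2l, hv2u⟩ := (mem_rect_iff (le_of_lt (ht.1 d hd).1)
        (le_of_lt (ht.1 d hd).2)).1 h1r
      rcases h2u with h | ⟨u, huQ, hu2, hu1, hur, humc⟩
      · have := (ht.1 d hd).2
        rw [← h1y, h] at this
        exact lt_irrefl _ this
      · apply hkd
        obtain ⟨hw1, hw2, hw3, hw4⟩ := (mem_rect_iff hv1l hv2l).1 hur
        apply mconn_extend humc (hdS d hd) (Or.inr (hu2.trans h1y))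
        rw [mem_rect_iff (le_of_lt (ht.1 d hd).1) (le_of_lt (ht.1 d hd).2)]
        refine ⟨hw1, ?_, hw3, ?_⟩
        · linarith
        · rw [hu2, h1y]
    · exact hne (ht.2.2.2 d hd d0 hd0 (by rw [← h1y, ← h2y]))
  -- reduced instance is feasible for Q.erase v
  have hfeas' : Feas p0 (D.erase d0) (Q.erase v) := by
    intro e he
    have he' := Finset.mem_of_mem_erase he
    have hne := (Finset.mem_erase.1 he).1
    have hmce : MConnected (Amb p0 D Q \ {v}) p0 e := by
      by_contra hc
      exact hne (huniq e he' hc)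
    exact transfer_erase ht he' hne hmce
      (fun z hz hzr hzQ => Finset.mem_erase.2
        ⟨fun h => hz.2 (by rw [h]; rfl), hzQ⟩)
      (fun z hz => hz.1)
  have hsub : ↑(Q.erase v) ⊆ Grd p0 (D.erase d0) :=
    (IH (m-1) (by omega)).2 p0 (D.erase d0) (Q.erase v) (tri_erase ht d0) hfeas'
      (by rw [Finset.card_erase_of_mem hd0, hcard])
      (by rw [Finset.card_erase_of_mem hvQ, hqcard])
  have hsub' : ↑(Q.erase v) ⊆ Grd p0 D :=
    fun z hz => grd_mono (Finset.erase_subset d0 D) (hsub hz)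
  -- pin v
  have hvgrid : v ∈ Grd p0 D := by
    have o := killed_struct ht hd0 (hfeas d0 hd0) hvQ hvP hvD hvmax hkd0
    rcases o with ⟨hx, hlt, hr, hu⟩ | ⟨hy, hlt, hr, hu⟩
    · refine ⟨Or.inr ⟨d0, hd0, hx⟩, ?_, d0, hd0, hr⟩
      rcases hu with h | ⟨u, huQ, hu2, hu1, _, _⟩
      · exact Or.inl h
      · have huE : u ∈ Q.erase v := Finset.mem_erase.2
          ⟨fun h => by rw [h] at hu1; exact lt_irrefl _ hu1, huQ⟩
        obtain ⟨_, hgy, _⟩ := hsub (Finset.mem_coe.2 huE)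
        rcases hgy with h | ⟨e, he, h⟩
        · exact Or.inl (by rw [← hu2, h])
        · exact Or.inr ⟨e, Finset.mem_of_mem_erase he, by rw [← hu2, h]⟩
    · refine ⟨?_, Or.inr ⟨d0, hd0, hy⟩, d0, hd0, hr⟩
      rcases hu with h | ⟨u, huQ, hu1, hu2, _, _⟩
      · exact Or.inl h
      · have huE : u ∈ Q.erase v := Finset.mem_erase.2
          ⟨fun h => by rw [h] at hu2; exact lt_irrefl _ hu2, huQ⟩
        obtain ⟨hgx, _, _⟩ := hsub (Finset.mem_coe.2 huE)
        rcases hgx with h | ⟨e, he, h⟩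
        · exact Or.inl (by rw [← hu1, h])
        · exact Or.inr ⟨e, Finset.mem_of_mem_erase he, by rw [← hu1, h]⟩
  -- assemble
  intro z hz
  by_cases hzv : z = v
  · rw [hzv]; exact hvgrid
  · exact hsub' (Finset.mem_coe.2 (Finset.mem_erase.2 ⟨hzv, Finset.mem_coe.1 hz⟩))

end Stmt12

/-- Any feasible solution of size `n` to a triangular instance of size `n ≥ 1`
is contained in the triangular grid. -/
theorem stmt12 (n : ℕ) (hn : 1 ≤ n) (p : Fin (n + 1) → Pt) (htri : IsTriangular n p)
    (Q : Finset Pt) (hfeas : MFeasible ↑(triP n p) ↑(triD n p) ↑Q) (hcard : Q.card = n) :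
    ↑Q ⊆ triGrid n p := by
  classical
  obtain ⟨htx, hty, hty0⟩ := htri
  set p0 : Pt := p 0 with hp0
  set D : Finset Pt := Finset.image p (Finset.univ.filter fun i : Fin (n+1) => i ≠ 0) with hD
  have hmemD : ∀ d, d ∈ D ↔ ∃ i : Fin (n+1), i ≠ 0 ∧ p i = d := by
    intro d
    simp [hD, Finset.mem_image, Finset.mem_filter]
  have hinj : Function.Injective p := by
    intro i j h
    by_contra hne
    rcases lt_trichotomy i j with hij | hij | hij
    · have := htx i j hij; rw [h] at this; exact lt_irrefl _ this
    · exact hne hij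
    · have := htx j i hij; rw [h] at this; exact lt_irrefl _ this
  have hDcard : D.card = n := by
    rw [hD, Finset.card_image_of_injective _ hinj]
    rw [Finset.filter_ne']
    rw [Finset.card_erase_of_mem (Finset.mem_univ 0)]
    simp
  have hTri : Stmt12.Tri p0 D := by
    refine ⟨?_, ?_, ?_, ?_⟩
    · intro d hd
      obtain ⟨i, hi0, hip⟩ := (hmemD d).1 hd
      rw [← hip]
      exact ⟨htx 0 i (Fin.pos_of_ne_zero hi0), hty0 i hi0⟩
    · intro d hd e he
      obtain ⟨i, hi0, hip⟩ := (hmemD d).1 hd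
      obtain ⟨j, hj0, hjp⟩ := (hmemD e).1 he
      rw [← hip, ← hjp]
      rcases lt_trichotomy i j with hij | hij | hij
      · exact iff_of_true (htx i j hij) (hty i j hi0 hij)
      · rw [hij]; exact iff_of_false (lt_irrefl _) (lt_irrefl _)
      · exact iff_of_false (not_lt_of_gt (htx j i hij)) (not_lt_of_gt (hty j i hj0 hij))
    · intro d hd e he heq
      obtain ⟨i, hi0, hip⟩ := (hmemD d).1 hd
      obtain ⟨j, hj0, hjp⟩ := (hmemD e).1 he
      rw [← hip, ← hjp] at heq ⊢
      rcases lt_trichotomy i j with hij | hij | hij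
      · exact absurd heq (ne_of_lt (htx i j hij))
      · rw [hij]
      · exact absurd heq.symm (ne_of_lt (htx j i hij))
    · intro d hd e he heq
      obtain ⟨i, hi0, hip⟩ := (hmemD d).1 hd
      obtain ⟨j, hj0, hjp⟩ := (hmemD e).1 he
      rw [← hip, ← hjp] at heq ⊢
      rcases lt_trichotomy i j with hij | hij | hij
      · exact absurd heq.symm (ne_of_lt (hty i j hi0 hij))
      · rw [hij]
      · exact absurd heq (ne_of_lt (hty j i hj0 hij))
  have hAmbeq : Stmt12.Amb p0 D Q = ↑(triP n p) ∪ ↑Q := by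
    ext z
    simp only [Stmt12.mem_amb, Set.mem_union, Finset.mem_coe, triP, Finset.mem_image,
      Finset.mem_univ, true_and]
    constructor
    · rintro (h | h | h)
      · exact Or.inl ⟨0, h.symm⟩
      · obtain ⟨i, _, hip⟩ := (hmemD z).1 h
        exact Or.inl ⟨i, hip⟩
      · exact Or.inr h
    · rintro (⟨i, hip⟩ | h)
      · by_cases hi0 : i = 0
        · left; rw [← hip, hi0]
        · right; left; exact (hmemD z).2 ⟨i, hi0, hip⟩
      · exact Or.inr (Or.inr h)
  have hFeas : Stmt12.Feas p0 D Q := by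
    intro d hd
    obtain ⟨i, hi0, hip⟩ := (hmemD d).1 hd
    have hdem : ((p 0, p i) : Dem) ∈ (↑(triD n p) : Set Dem) := by
      simp only [Finset.mem_coe, triD, Finset.mem_image, Finset.mem_filter, Finset.mem_univ,
        true_and]
      exact ⟨i, hi0, rfl⟩
    have := hfeas _ hdem
    rw [hAmbeq]
    rw [← hip]
    exact this
  have hmain := (Stmt12.main_ab n).2 p0 D Q hTri hFeas hDcard hcard
  intro z hz
  obtain ⟨h1, h2, d, hd, h3⟩ := hmain hz
  obtain ⟨i, hi0, hip⟩ := (hmemD d).1 hd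
  refine ⟨?_, ?_, i, hi0, by rw [hip]; exact h3⟩
  · rcases h1 with h | ⟨e, he, h⟩
    · exact ⟨0, h⟩
    · obtain ⟨j, _, hjp⟩ := (hmemD e).1 he
      exact ⟨j, by rw [h, hjp]⟩
  · rcases h2 with h | ⟨e, he, h⟩
    · exact ⟨0, h⟩
    · obtain ⟨j, _, hjp⟩ := (hmemD e).1 he
      exact ⟨j, by rw [h, hjp]⟩
end

section
/- A finite set Q ⊆ ℝ² is arboreally satisfied if and only if every pair of points of Q is M-connected in Q. -/
section Stmt13Aux

lemma between_iff' (a b c : ℝ) : (min a c ≤ b ∧ b ≤ max a c) ↔ |a - b| + |b - c| = |a - c| := by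
  rcases le_total a c with h | h <;>
    rcases le_total a b with h1 | h1 <;>
    rcases le_total b c with h2 | h2 <;>
    simp [min_eq_left, min_eq_right, max_eq_left, max_eq_right, h,
      abs_of_nonneg, abs_of_nonpos, sub_nonneg, sub_nonpos, h1, h2] <;>
    (constructor <;> intro hh <;> first | linarith | (constructor <;> linarith))

lemma dist1_comm' (p q : Pt) : dist1 p q = dist1 q p := by
  simp [dist1, abs_sub_comm]

lemma dist1_triangle' (p z q : Pt) : dist1 p q ≤ dist1 p z + dist1 z q := by
  have h1 := abs_sub_le p.1 z.1 q.1
  have h2 := abs_sub_le p.2 z.2 q.2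
  simp only [dist1]; linarith

lemma dist1_eq_zero' {p q : Pt} (h : dist1 p q = 0) : p = q := by
  have a1 := abs_nonneg (p.1 - q.1)
  have a2 := abs_nonneg (p.2 - q.2)
  simp only [dist1] at h
  have e1 : p.1 = q.1 := by have := abs_eq_zero.mp (by linarith : |p.1 - q.1| = 0); linarith
  have e2 : p.2 = q.2 := by have := abs_eq_zero.mp (by linarith : |p.2 - q.2| = 0); linarith
  exact Prod.ext e1 e2

lemma mem_rect_iff' {p q z : Pt} : z ∈ Rect p q ↔ dist1 p z + dist1 z q = dist1 p q := by
  have hx := between_iff' p.1 z.1 q.1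
  have hy := between_iff' p.2 z.2 q.2
  have tx : |p.1 - q.1| ≤ |p.1 - z.1| + |z.1 - q.1| := abs_sub_le _ _ _
  have ty : |p.2 - q.2| ≤ |p.2 - z.2| + |z.2 - q.2| := abs_sub_le _ _ _
  simp only [Rect, Set.mem_setOf_eq, dist1]
  constructor
  · rintro ⟨h1, h2, h3, h4⟩
    have ex := hx.mp ⟨h1, h2⟩
    have ey := hy.mp ⟨h3, h4⟩
    linarith
  · intro h
    obtain ⟨h1, h2⟩ := hx.mpr (by linarith)
    obtain ⟨h3, h4⟩ := hy.mpr (by linarith)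
    exact ⟨h1, h2, h3, h4⟩

lemma left_mem_rect (p q : Pt) : p ∈ Rect p q :=
  ⟨min_le_left _ _, le_max_left _ _, min_le_left _ _, le_max_left _ _⟩

lemma right_mem_rect (p q : Pt) : q ∈ Rect p q :=
  ⟨min_le_right _ _, le_max_right _ _, min_le_right _ _, le_max_right _ _⟩

/-- ℕ-indexed version of `MConnected`. -/
def MC (S : Set Pt) (p q : Pt) : Prop :=
  ∃ (k : ℕ) (g : ℕ → Pt), g 0 = p ∧ g k = q ∧ (∀ i ≤ k, g i ∈ S) ∧
    (∀ i < k, Aligned (g i) (g (i + 1))) ∧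
    (∑ i ∈ Finset.range k, dist1 (g i) (g (i + 1))) = dist1 p q

lemma mc_iff (S : Set Pt) (p q : Pt) : MC S p q ↔ MConnected S p q := by
  constructor
  · rintro ⟨k, g, h0, hk, hmem, hadj, hsum⟩
    refine ⟨k, fun i => g i.val, by simpa using h0, by simpa using hk,
      fun i => hmem i.val (by omega), fun i => hadj i.val i.isLt, ?_⟩
    rw [← hsum, ← Fin.sum_univ_eq_sum_range (fun n => dist1 (g n) (g (n + 1))) k]
    rfl
  · rintro ⟨k, f, h0, hk, hmem, hadj, hsum⟩
    refine ⟨k, fun n => f ⟨min n k, by omega⟩, ?_, ?_, fun i _ => hmem _, ?_, ?_⟩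
    · have : (⟨min 0 k, by omega⟩ : Fin (k + 1)) = 0 := by
        ext; simp
      exact (congrArg f this).trans h0
    · have : (⟨min k k, by omega⟩ : Fin (k + 1)) = Fin.last k := by
        ext; simp
      exact (congrArg f this).trans hk
    · intro i hi
      have e1 : (⟨min i k, by omega⟩ : Fin (k + 1)) = (⟨i, hi⟩ : Fin k).castSucc := by
        ext; simp [Nat.min_eq_left (le_of_lt hi)]
      have e2 : (⟨min (i + 1) k, by omega⟩ : Fin (k + 1)) = (⟨i, hi⟩ : Fin k).succ := by
        ext; simp [Nat.min_eq_left hi]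
      have h' := hadj ⟨i, hi⟩
      rw [← e1, ← e2] at h'
      exact h'
    · rw [← hsum, ← Fin.sum_univ_eq_sum_range
        (fun n => dist1 (f ⟨min n k, by omega⟩) (f ⟨min (n + 1) k, by omega⟩)) k]
      apply Finset.sum_congr rfl
      intro i _
      congr 1 <;> · congr 1; ext; simp [Nat.min_eq_left, i.isLt, le_of_lt, Nat.succ_le_of_lt]

lemma mc_pair {S : Set Pt} {p q : Pt} (hp : p ∈ S) (hq : q ∈ S) (hal : Aligned p q) :
    MC S p q := by
  refine ⟨1, fun n => if n = 0 then p else q, by simp, by simp, ?_, ?_, by simp⟩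
  · intro i hi; interval_cases i <;> simp [hp, hq]
  · intro i hi; interval_cases i; simpa using hal

lemma mc_trans {S : Set Pt} {p r q : Pt} (hr : r ∈ Rect p q)
    (h1 : MC S p r) (h2 : MC S r q) : MC S p q := by
  obtain ⟨k1, g1, e0, e1, m1, a1, s1⟩ := h1
  obtain ⟨k2, g2, f0, f1, m2, a2, s2⟩ := h2
  set g : ℕ → Pt := fun n => if n < k1 then g1 n else g2 (n - k1) with hg
  have hle : ∀ n ≤ k1, g n = g1 n := by
    intro n hn
    rcases lt_or_eq_of_le hn with h | h
    · simp [hg, h]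
    · subst h; simp [hg, f0, e1]
  have hge : ∀ n, k1 ≤ n → g n = g2 (n - k1) := by
    intro n hn; simp [hg, Nat.not_lt.mpr hn]
  refine ⟨k1 + k2, g, by rw [hle 0 (Nat.zero_le _), e0], ?_, ?_, ?_, ?_⟩
  · rw [hge _ (Nat.le_add_right _ _), Nat.add_sub_cancel_left, f1]
  · intro i hi
    rcases le_or_gt i k1 with h | h
    · rw [hle i h]; exact m1 i h
    · rw [hge i (le_of_lt h)]; exact m2 _ (by omega)
  · intro i hi
    rcases lt_or_ge (i + 1) k1 with h | h
    · rw [hle i (by omega), hle (i + 1) (by omega)]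
      exact a1 i (by omega)
    · rcases lt_or_ge i k1 with h' | h'
      · -- i + 1 = k1
        have : i + 1 = k1 := by omega
        rw [hle i (by omega), hle (i + 1) (by omega)]
        exact a1 i (by omega)
      · rw [hge i h', hge (i + 1) (by omega)]
        have : i + 1 - k1 = (i - k1) + 1 := by omega
        rw [this]
        exact a2 (i - k1) (by omega)
  · rw [Finset.sum_range_add]
    have hA : ∑ i ∈ Finset.range k1, dist1 (g i) (g (i + 1))
        = ∑ i ∈ Finset.range k1, dist1 (g1 i) (g1 (i + 1)) := by
      apply Finset.sum_congr rfl
      intro i hi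
      rw [Finset.mem_range] at hi
      rw [hle i (by omega), hle (i + 1) (by omega)]
    have hB : ∑ i ∈ Finset.range k2, dist1 (g (k1 + i)) (g (k1 + i + 1))
        = ∑ i ∈ Finset.range k2, dist1 (g2 i) (g2 (i + 1)) := by
      apply Finset.sum_congr rfl
      intro i hi
      rw [hge (k1 + i) (by omega), hge (k1 + i + 1) (by omega)]
      congr 2 <;> omega
    rw [hA, hB, s1, s2]
    exact mem_rect_iff'.mp hr

lemma path_lb (g : ℕ → Pt) (n : ℕ) :
    dist1 (g 0) (g n) ≤ ∑ i ∈ Finset.range n, dist1 (g i) (g (i + 1)) := by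
  induction n with
  | zero => simp [dist1]
  | succ n ih =>
    rw [Finset.sum_range_succ]
    calc dist1 (g 0) (g (n + 1)) ≤ dist1 (g 0) (g n) + dist1 (g n) (g (n + 1)) :=
          dist1_triangle' _ _ _
    _ ≤ _ := by linarith

open Classical in
lemma arb_mc (Q : Finset Pt) (hA : ArboreallySatisfied Q) :
    ∀ n : ℕ, ∀ p ∈ Q, ∀ q ∈ Q, (Q.filter (· ∈ Rect p q)).card ≤ n → MC ↑Q p q := by
  intro n
  induction n with
  | zero =>
    intro p hp q hq hcard
    exfalso
    have hmem : p ∈ Q.filter (· ∈ Rect p q) :=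
      Finset.mem_filter.mpr ⟨hp, left_mem_rect p q⟩
    have := Finset.card_pos.mpr ⟨p, hmem⟩
    omega
  | succ n ih =>
    intro p hp q hq hcard
    by_cases hal : Aligned p q
    · exact mc_pair (by exact_mod_cast hp) (by exact_mod_cast hq) hal
    · obtain ⟨r, hrQ, hrp, hrq, hrR⟩ := hA p hp q hq hal
      have key : dist1 p r + dist1 r q = dist1 p q := mem_rect_iff'.mp hrR
      have hqmem : q ∈ Q.filter (· ∈ Rect p q) :=
        Finset.mem_filter.mpr ⟨hq, right_mem_rect p q⟩
      have hpmem : p ∈ Q.filter (· ∈ Rect p q) :=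
        Finset.mem_filter.mpr ⟨hp, left_mem_rect p q⟩
      have sub1 : Q.filter (· ∈ Rect p r) ⊆ (Q.filter (· ∈ Rect p q)).erase q := by
        intro z hz
        rw [Finset.mem_filter] at hz
        obtain ⟨hzQ, hzR⟩ := hz
        have hz' : dist1 p z + dist1 z r = dist1 p r := mem_rect_iff'.mp hzR
        have t1 := dist1_triangle' z r q
        have t2 := dist1_triangle' p z q
        have hzpq : z ∈ Rect p q := mem_rect_iff'.mpr (by linarith)
        refine Finset.mem_erase.mpr ⟨?_, Finset.mem_filter.mpr ⟨hzQ, hzpq⟩⟩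
        rintro rfl
        have hc := dist1_comm' z r
        exact hrq (dist1_eq_zero' (by linarith : dist1 r z = 0))
      have sub2 : Q.filter (· ∈ Rect r q) ⊆ (Q.filter (· ∈ Rect p q)).erase p := by
        intro z hz
        rw [Finset.mem_filter] at hz
        obtain ⟨hzQ, hzR⟩ := hz
        have hz' : dist1 r z + dist1 z q = dist1 r q := mem_rect_iff'.mp hzR
        have t1 := dist1_triangle' p r z
        have t2 := dist1_triangle' p z q
        have hzpq : z ∈ Rect p q := mem_rect_iff'.mpr (by linarith)
        refine Finset.mem_erase.mpr ⟨?_, Finset.mem_filter.mpr ⟨hzQ, hzpq⟩⟩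
        rintro rfl
        have hc := dist1_comm' r z
        have hc2 := dist1_comm' z q
        exact hrp (dist1_eq_zero' (by linarith : dist1 r z = 0))
      have c1 : (Q.filter (· ∈ Rect p r)).card ≤ n := by
        have h1 := Finset.card_le_card sub1
        rw [Finset.card_erase_of_mem hqmem] at h1
        have h2 := Finset.card_pos.mpr ⟨q, hqmem⟩
        omega
      have c2 : (Q.filter (· ∈ Rect r q)).card ≤ n := by
        have h1 := Finset.card_le_card sub2
        rw [Finset.card_erase_of_mem hpmem] at h1
        have h2 := Finset.card_pos.mpr ⟨p, hpmem⟩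
        omega
      exact mc_trans hrR (ih p hp r hrQ c1) (ih r hrQ q hq c2)

end Stmt13Aux

/-- A finite set `Q ⊆ ℝ²` is arboreally satisfied iff every pair of its points
is M-connected in `Q`. -/
theorem stmt13 (Q : Finset Pt) :
    ArboreallySatisfied Q ↔ ∀ p ∈ Q, ∀ q ∈ Q, MConnected ↑Q p q := by
  constructor
  · intro hA p hp q hq
    exact (mc_iff _ p q).mp (arb_mc Q hA _ p hp q hq le_rfl)
  · intro h p hp q hq hal
    obtain ⟨k, g, h0, hk, hmem, hadj, hsum⟩ := (mc_iff _ p q).mpr (h p hp q hq)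
    have hpq : p ≠ q := by
      rintro rfl; exact hal (Or.inl rfl)
    have hrect : ∀ i ≤ k, g i ∈ Rect p q := by
      intro i hik
      have pre := path_lb g i
      have suf := path_lb (fun n => g (i + n)) (k - i)
      simp only [← Nat.add_assoc, Nat.add_zero, show i + (k - i) = k by omega] at suf
      have split : (∑ j ∈ Finset.range k, dist1 (g j) (g (j + 1)))
          = (∑ j ∈ Finset.range i, dist1 (g j) (g (j + 1)))
            + ∑ j ∈ Finset.range (k - i), dist1 (g (i + j)) (g (i + j + 1)) := by
        have hki : i + (k - i) = k := by omega
        rw [← Finset.sum_range_add, hki]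
      have tri := dist1_triangle' p (g i) q
      rw [h0] at pre
      rw [hk] at suf
      rw [split] at hsum
      exact mem_rect_iff'.mpr (by linarith)
    classical
    have hex : ∃ j, g j ≠ p := ⟨k, by rw [hk]; exact hpq.symm⟩
    have hne : g (Nat.find hex) ≠ p := Nat.find_spec hex
    set i := Nat.find hex with hidef
    have hmin : ∀ j, j < i → g j = p := fun j hj => not_not.mp (Nat.find_min hex hj)
    have hipos : 0 < i := by
      rcases Nat.eq_zero_or_pos i with hz | h
      · exact absurd h0 (hz ▸ hne)
      · exact h
    have hik : i ≤ k := Nat.find_le (by rw [hk]; exact hpq.symm)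
    have hprev : g (i - 1) = p := hmin _ (by omega)
    have hadj' : Aligned (g (i - 1)) (g (i - 1 + 1)) := hadj _ (by omega)
    rw [show i - 1 + 1 = i by omega, hprev] at hadj'
    refine ⟨g i, by exact_mod_cast hmem i hik, hne, ?_, hrect i hik⟩
    intro h'
    rw [h'] at hadj'
    exact hal hadj'
end

section
/- Let (P,D) be a MinGMConn instance with complete k-partite demands: P is partitioned into disjoint nonempty sets S₁,…,S_k, all points of P have pairwise distinct y-coordinates, and D consists of exactly the pairs (p,q) with x(p) < x(q) such that p and q lie in different parts. Then there exists a subset P̃ ⊆ P with the following properties, where D̃ denotes the complete k-partite demand set on the partition S₁ ∩ P̃, …, S_k ∩ P̃: (1) every feasible solution Q for (P̃, D̃) is also a feasible solution for (P,D); and (2) |P̃| ≤ 8·IS(P̃, D̃). -/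
open Finset

lemma mconn_mono {S T : Set Pt} (h : S ⊆ T) {p q : Pt} (hc : MConnected S p q) :
    MConnected T p q := by
  obtain ⟨k, f, h1, h2, h3, h4, h5⟩ := hc
  exact ⟨k, f, h1, h2, fun i => h (h3 i), h4, h5⟩

lemma mconn_prepend {S : Set Pt} {p r q : Pt} (hp : p ∈ S) (ha : Aligned p r)
    (hd : dist1 p r + dist1 r q = dist1 p q) (hc : MConnected S r q) : MConnected S p q := by
  obtain ⟨k, f, h1, h2, h3, h4, h5⟩ := hc
  have hcs : ∀ j : Fin k, (Fin.cons p f : Fin (k+2) → Pt) (j.succ).castSucc = f j.castSucc := by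
    intro j; rw [← Fin.succ_castSucc, Fin.cons_succ]
  refine ⟨k + 1, Fin.cons p f, Fin.cons_zero _ _, ?_, ?_, ?_, ?_⟩
  · rw [← Fin.succ_last, Fin.cons_succ]; exact h2
  · intro i
    induction i using Fin.cases with
    | zero => simpa using hp
    | succ j => simpa using h3 j
  · intro i
    induction i using Fin.cases with
    | zero =>
      simp only [Fin.castSucc_zero, Fin.cons_zero, Fin.cons_succ, h1]
      exact ha
    | succ j =>
      rw [hcs j, Fin.cons_succ]
      exact h4 j
  · rw [Fin.sum_univ_succ]
    simp only [hcs, Fin.cons_succ, Fin.castSucc_zero, Fin.cons_zero, h1, h5]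
    exact hd

lemma mconn_append {S : Set Pt} {p s q : Pt} (hq : q ∈ S) (ha : Aligned s q)
    (hd : dist1 p s + dist1 s q = dist1 p q) (hc : MConnected S p s) : MConnected S p q := by
  obtain ⟨k, f, h1, h2, h3, h4, h5⟩ := hc
  refine ⟨k + 1, Fin.snoc f q, ?_, ?_, ?_, ?_, ?_⟩
  · rw [show (0 : Fin (k+2)) = (0 : Fin (k+1)).castSucc by simp, Fin.snoc_castSucc]; exact h1
  · simp [Fin.snoc_last]
  · intro i
    induction i using Fin.lastCases with
    | last => rw [Fin.snoc_last]; exact hq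
    | cast j => rw [Fin.snoc_castSucc]; exact h3 j
  · intro i
    induction i using Fin.lastCases with
    | last =>
      rw [Fin.snoc_castSucc, Fin.succ_last, Fin.snoc_last, h2]
      exact ha
    | cast j =>
      rw [Fin.snoc_castSucc, Fin.succ_castSucc, Fin.snoc_castSucc]
      exact h4 j
  · rw [Fin.sum_univ_castSucc]
    simp only [Fin.snoc_castSucc, Fin.succ_castSucc, Fin.succ_last, Fin.snoc_last, h2, h5]
    exact hd



lemma abs_add_between {a b c : ℝ} (h1 : min a b ≤ c) (h2 : c ≤ max a b) :
    |a - c| + |c - b| = |a - b| := by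
  rcases le_total a b with h | h
  · rw [min_eq_left h] at h1; rw [max_eq_right h] at h2
    rw [abs_of_nonpos (by linarith), abs_of_nonpos (by linarith), abs_of_nonpos (by linarith)]
    ring
  · rw [min_eq_right h] at h1; rw [max_eq_left h] at h2
    rw [abs_of_nonneg (by linarith), abs_of_nonneg (by linarith), abs_of_nonneg (by linarith)]
    ring

lemma between_trans {a b c d : ℝ} (h1 : min a b ≤ c) (h2 : c ≤ max a b)
    (h3 : min b c ≤ d) (h4 : d ≤ max b c) : min a d ≤ c ∧ c ≤ max a d := by
  rcases le_total a b with h | h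
  · rw [min_eq_left h] at h1; rw [max_eq_right h] at h2
    have hcd : c ≤ d := by rwa [min_eq_right h2] at h3
    exact ⟨le_trans (min_le_left a d) h1, le_trans hcd (le_max_right a d)⟩
  · rw [min_eq_right h] at h1; rw [max_eq_left h] at h2
    have hdc : d ≤ c := by rwa [max_eq_right h1] at h4
    exact ⟨le_trans (min_le_right a d) hdc, le_trans h2 (le_max_left a d)⟩

lemma card_le_two_of (A : Finset Pt)
    (hinj : ∀ u ∈ A, ∀ v ∈ A, u ≠ v → u.2 ≠ v.2)
    (h3 : ∀ u ∈ A, ∀ v ∈ A, ∀ t ∈ A, u.2 < v.2 → v.2 < t.2 → False) : A.card ≤ 2 := by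
  by_contra hc
  push_neg at hc
  obtain ⟨a, b, c, ha, hb, hc', hab, hac, hbc⟩ := Finset.two_lt_card_iff.mp hc
  have hab2 := hinj a ha b hb hab
  have hac2 := hinj a ha c hc' hac
  have hbc2 := hinj b hb c hc' hbc
  rcases lt_trichotomy a.2 b.2 with h1 | h1 | h1
  · rcases lt_trichotomy c.2 a.2 with h2 | h2 | h2
    · exact h3 c hc' a ha b hb h2 h1
    · exact hac2 h2.symm
    · rcases lt_trichotomy c.2 b.2 with h4 | h4 | h4
      · exact h3 a ha c hc' b hb h2 h4
      · exact hbc2 h4.symm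
      · exact h3 a ha b hb c hc' h1 h4
  · exact hab2 h1
  · rcases lt_trichotomy c.2 b.2 with h2 | h2 | h2
    · exact h3 c hc' b hb a ha h2 h1
    · exact hbc2 h2.symm
    · rcases lt_trichotomy c.2 a.2 with h4 | h4 | h4
      · exact h3 b hb c hc' a ha h2 h4
      · exact hac2 h4.symm
      · exact h3 b hb a ha c hc' h1 h4



open scoped Classical in
lemma pack (l r : Pt → ℝ) (F : Finset Pt) (hlr : ∀ i ∈ F, l i < r i)
    (hdepth : ∀ Y : ℝ, (F.filter (fun i => l i < Y ∧ Y < r i)).card ≤ 4) :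
    ∃ G : Finset Pt, G ⊆ F ∧ F.card ≤ 4 * G.card ∧
      ∀ i ∈ G, ∀ j ∈ G, i ≠ j → r i ≤ l j ∨ r j ≤ l i := by
  induction F using Finset.strongInduction with
  | _ F ih =>
  rcases F.eq_empty_or_nonempty with rfl | hF
  · exact ⟨∅, le_refl _, by simp, by simp⟩
  obtain ⟨a, haF, hamin⟩ := F.exists_min_image r hF
  set Kill := F.filter (fun j => l j < r a ∧ l a < r j) with hK
  have haK : a ∈ Kill := by
    simp only [hK, Finset.mem_filter]
    exact ⟨haF, hlr a haF, hlr a haF⟩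
  obtain ⟨m, hmK, hmmax⟩ := Kill.exists_max_image l ⟨a, haK⟩
  have hmra : l m < r a := (Finset.mem_filter.mp hmK).2.1
  set Y := (l m + r a) / 2 with hY
  have hKsub : Kill ⊆ F.filter (fun i => l i < Y ∧ Y < r i) := by
    intro j hj
    have hj' := Finset.mem_filter.mp hj
    refine Finset.mem_filter.mpr ⟨hj'.1, ?_, ?_⟩
    · have := hmmax j hj
      simp only [hY]; linarith
    · have := hamin j hj'.1
      simp only [hY]; linarith
  have hKcard : Kill.card ≤ 4 := le_trans (Finset.card_le_card hKsub) (hdepth Y)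
  have hss : F \ Kill ⊂ F := by
    refine Finset.sdiff_ssubset ?_ ⟨a, haK⟩
    exact Finset.filter_subset _ _
  obtain ⟨G, hG1, hG2, hG3⟩ := ih (F \ Kill) hss (fun i hi => hlr i (Finset.mem_sdiff.mp hi).1)
    (fun Y' => le_trans (Finset.card_le_card (Finset.filter_subset_filter _
      (Finset.sdiff_subset))) (hdepth Y'))
  have haG : a ∉ G := fun h => (Finset.mem_sdiff.mp (hG1 h)).2 haK
  refine ⟨insert a G, ?_, ?_, ?_⟩
  · intro x hx
    rcases Finset.mem_insert.mp hx with rfl | hx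
    · exact haF
    · exact (Finset.mem_sdiff.mp (hG1 hx)).1
  · have hKF : Kill ⊆ F := Finset.filter_subset _ _
    have h1 : (F \ Kill).card + Kill.card = F.card := Finset.card_sdiff_add_card_eq_card hKF
    have h2 : Kill.card ≤ F.card := Finset.card_le_card (Finset.filter_subset _ _)
    rw [Finset.card_insert_of_notMem haG]
    omega
  · intro i hi j hj hij
    have sep : ∀ x ∈ G, r a ≤ l x ∨ r x ≤ l a := by
      intro x hx
      have hxk := (Finset.mem_sdiff.mp (hG1 hx)).2
      simp only [hK, Finset.mem_filter, not_and] at hxk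
      have hxF := (Finset.mem_sdiff.mp (hG1 hx)).1
      by_cases h : l x < r a
      · exact Or.inr (not_lt.mp (hxk hxF h))
      · exact Or.inl (not_lt.mp h)
    rcases Finset.mem_insert.mp hi with hi0 | hi2
    · rcases Finset.mem_insert.mp hj with hj0 | hj2
      · exact absurd (hi0.trans hj0.symm) hij
      · rw [hi0]
        exact sep j hj2
    · rcases Finset.mem_insert.mp hj with hj0 | hj2
      · rw [hj0]
        exact (sep i hi2).symm
      · exact hG3 i hi2 j hj2 hij



def KeepP (pi : Pt → ℕ) (P : Finset Pt) (z : Pt) : Prop :=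
  ∃ w ∈ P, w.1 ≠ z.1 ∧ pi w ≠ pi z ∧ ∀ z' ∈ P, z'.1 = z.1 →
    min z.2 w.2 < z'.2 → z'.2 < max z.2 w.2 → pi z' = pi w

lemma exists_keep (pi : Pt → ℕ) (P : Finset Pt) {p q : Pt} (hp : p ∈ P) (hq : q ∈ P)
    (hx : p.1 ≠ q.1) (hpq : pi p ≠ pi q) :
    ∃ r ∈ P, KeepP pi P r ∧ r.1 = p.1 ∧ min p.2 q.2 ≤ r.2 ∧ r.2 ≤ max p.2 q.2 ∧
      pi r ≠ pi q := by
  classical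
  set T := P.filter (fun z => z.1 = p.1 ∧ min p.2 q.2 ≤ z.2 ∧ z.2 ≤ max p.2 q.2 ∧
    pi z ≠ pi q) with hT
  have hpT : p ∈ T :=
    Finset.mem_filter.mpr ⟨hp, rfl, min_le_left _ _, le_max_left _ _, hpq⟩
  obtain ⟨r, hrT, hrmin⟩ := T.exists_min_image (fun z => |z.2 - q.2|) ⟨p, hpT⟩
  obtain ⟨hrP, hrx, hr1, hr2, hrq⟩ := Finset.mem_filter.mp hrT
  refine ⟨r, hrP, ⟨q, hq, by rw [hrx]; exact hx.symm, hrq.symm, ?_⟩, hrx, hr1, hr2, hrq⟩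
  intro z' hz' hzx hzb1 hzb2
  by_contra hne
  have hz'T : z' ∈ T := by
    refine Finset.mem_filter.mpr ⟨hz', by rw [hzx, hrx], ?_, ?_, hne⟩
    · calc min p.2 q.2 ≤ min r.2 q.2 := le_min hr1 (min_le_right _ _)
        _ ≤ z'.2 := le_of_lt hzb1
    · calc z'.2 ≤ max r.2 q.2 := le_of_lt hzb2
        _ ≤ max p.2 q.2 := max_le hr2 (le_max_right _ _)
  have hlt : |z'.2 - q.2| < |r.2 - q.2| := by
    rcases le_total r.2 q.2 with h | h
    · rw [min_eq_left h] at hzb1; rw [max_eq_right h] at hzb2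
      rw [abs_of_nonpos (by linarith), abs_of_nonpos (by linarith)]
      linarith
    · rw [min_eq_right h] at hzb1; rw [max_eq_left h] at hzb2
      rw [abs_of_nonneg (by linarith), abs_of_nonneg (by linarith)]
      linarith
  exact absurd (hrmin z' hz'T) (not_le.mpr hlt)



lemma depth_le_four (P F : Finset Pt) (pi : Pt → ℕ)
    (hY : ∀ p ∈ P, ∀ q ∈ P, p ≠ q → p.2 ≠ q.2) (hFP : F ⊆ P) (wit : Pt → Pt)
    (hw1 : ∀ z ∈ F, pi (wit z) ≠ pi z)
    (hw2 : ∀ z ∈ F, ∀ z' ∈ P, z'.1 = z.1 → min z.2 (wit z).2 < z'.2 →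
      z'.2 < max z.2 (wit z).2 → pi z' = pi (wit z))
    (x₀ Y : ℝ) :
    (F.filter (fun z => z.1 = x₀ ∧ min z.2 (wit z).2 < Y ∧ Y < max z.2 (wit z).2)).card
      ≤ 4 := by
  classical
  set A := F.filter (fun z => z.1 = x₀ ∧ z.2 < Y ∧ Y < (wit z).2) with hA
  set B := F.filter (fun z => z.1 = x₀ ∧ (wit z).2 < Y ∧ Y < z.2) with hB
  have hsub : F.filter (fun z => z.1 = x₀ ∧ min z.2 (wit z).2 < Y ∧ Y < max z.2 (wit z).2)
      ⊆ A ∪ B := by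
    intro z hz
    obtain ⟨hzF, hzx, hz1, hz2⟩ := Finset.mem_filter.mp hz
    rcases lt_trichotomy z.2 Y with h | h | h
    · have hw : Y < (wit z).2 := by
        rcases le_total (wit z).2 z.2 with h' | h'
        · rw [max_eq_left h'] at hz2; linarith
        · rwa [max_eq_right h'] at hz2
      exact Finset.mem_union_left _ (Finset.mem_filter.mpr ⟨hzF, hzx, h, hw⟩)
    · exfalso
      rcases le_total z.2 (wit z).2 with h' | h'
      · rw [min_eq_left h'] at hz1; linarith
      · rw [max_eq_left h'] at hz2; linarith
    · have hw : (wit z).2 < Y := by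
        rcases le_total z.2 (wit z).2 with h' | h'
        · rw [min_eq_left h'] at hz1; linarith
        · rwa [min_eq_right h'] at hz1
      exact Finset.mem_union_right _ (Finset.mem_filter.mpr ⟨hzF, hzx, hw, h⟩)
  have hAcard : A.card ≤ 2 := by
    apply card_le_two_of
    · intro u hu v hv huv
      exact hY u (hFP (Finset.mem_filter.mp hu).1) v (hFP (Finset.mem_filter.mp hv).1) huv
    · intro u hu v hv t ht huv hvt
      obtain ⟨huF, hux, hu1, hu2⟩ := Finset.mem_filter.mp hu
      obtain ⟨hvF, hvx, hv1, hv2⟩ := Finset.mem_filter.mp hv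
      obtain ⟨htF, htx, ht1, ht2⟩ := Finset.mem_filter.mp ht
      have huw : u.2 < (wit u).2 := lt_trans hu1 hu2
      have hvw : v.2 < (wit v).2 := lt_trans hv1 hv2
      have e1 : pi v = pi (wit u) :=
        hw2 u huF v (hFP hvF) (hvx.trans hux.symm)
          (by rw [min_eq_left (le_of_lt huw)]; exact huv)
          (by rw [max_eq_right (le_of_lt huw)]; linarith)
      have e2 : pi t = pi (wit u) :=
        hw2 u huF t (hFP htF) (htx.trans hux.symm)
          (by rw [min_eq_left (le_of_lt huw)]; linarith)
          (by rw [max_eq_right (le_of_lt huw)]; linarith)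
      have e3 : pi t = pi (wit v) :=
        hw2 v hvF t (hFP htF) (htx.trans hvx.symm)
          (by rw [min_eq_left (le_of_lt hvw)]; exact hvt)
          (by rw [max_eq_right (le_of_lt hvw)]; linarith)
      exact hw1 v hvF (by rw [← e3, e2, ← e1])
  have hBcard : B.card ≤ 2 := by
    apply card_le_two_of
    · intro u hu v hv huv
      exact hY u (hFP (Finset.mem_filter.mp hu).1) v (hFP (Finset.mem_filter.mp hv).1) huv
    · intro u hu v hv t ht huv hvt
      obtain ⟨huF, hux, hu1, hu2⟩ := Finset.mem_filter.mp hu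
      obtain ⟨hvF, hvx, hv1, hv2⟩ := Finset.mem_filter.mp hv
      obtain ⟨htF, htx, ht1, ht2⟩ := Finset.mem_filter.mp ht
      have htw : (wit t).2 < t.2 := lt_trans ht1 ht2
      have hvw2 : (wit v).2 < v.2 := lt_trans hv1 hv2
      have e1 : pi v = pi (wit t) :=
        hw2 t htF v (hFP hvF) (hvx.trans htx.symm)
          (by rw [min_eq_right (le_of_lt htw)]; linarith)
          (by rw [max_eq_left (le_of_lt htw)]; exact hvt)
      have e2 : pi u = pi (wit t) :=
        hw2 t htF u (hFP huF) (hux.trans htx.symm)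
          (by rw [min_eq_right (le_of_lt htw)]; linarith)
          (by rw [max_eq_left (le_of_lt htw)]; linarith)
      have e3 : pi u = pi (wit v) :=
        hw2 v hvF u (hFP huF) (hux.trans hvx.symm)
          (by rw [min_eq_right (le_of_lt hvw2)]; linarith)
          (by rw [max_eq_left (le_of_lt hvw2)]; exact huv)
      exact hw1 v hvF (by rw [← e3, e2, ← e1])
  calc (F.filter _).card ≤ (A ∪ B).card := Finset.card_le_card hsub
    _ ≤ A.card + B.card := Finset.card_union_le _ _
    _ ≤ 4 := by omega

theorem tst : True := trivial

lemma vseg_ss {a y1 y2 a' y3 y4 : ℝ}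
    (h : a ≠ a' ∨ max y1 y2 ≤ min y3 y4 ∨ max y3 y4 ≤ min y1 y2) :
    Set.Subsingleton (VSeg a y1 y2 ∩ VSeg a' y3 y4) := by
  rintro u ⟨⟨hu1, hu2, hu3⟩, ⟨hu4, hu5, hu6⟩⟩ v ⟨⟨hv1, hv2, hv3⟩, ⟨hv4, hv5, hv6⟩⟩
  rcases h with h | h | h
  · exact absurd (hu1.symm.trans hu4) h
  · have hu' : u.2 = max y1 y2 := le_antisymm hu3 (le_trans h hu5)
    have hv' : v.2 = max y1 y2 := le_antisymm hv3 (le_trans h hv5)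
    exact Prod.ext (hu1.trans hv1.symm) (hu'.trans hv'.symm)
  · have hu' : u.2 = max y3 y4 := le_antisymm hu6 (le_trans h hu2)
    have hv' : v.2 = max y3 y4 := le_antisymm hv6 (le_trans h hv2)
    exact Prod.ext (hu1.trans hv1.symm) (hu'.trans hv'.symm)


/-- Sparsification for complete k-partite demands: there is `P̃ ⊆ P` with the
induced complete k-partite demand set `D̃` such that every feasible solution for `(P̃, D̃)` is
feasible for `(P,D)`, and `|P̃| ≤ 8·IS(P̃, D̃)`. -/
theorem stmt14 (k : ℕ) (S : Fin k → Finset Pt) (P : Finset Pt) (D : Finset Dem)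
    (hdisj : ∀ i j, i ≠ j → Disjoint (S i) (S j))
    (hne : ∀ i, (S i).Nonempty)
    (hP : (↑P : Set Pt) = ⋃ i, (↑(S i) : Set Pt))
    (hY : DistinctY P)
    (hD : ∀ d : Dem, d ∈ D ↔
      (d.1 ∈ P ∧ d.2 ∈ P ∧ d.1.1 < d.2.1 ∧ ∃ i j, i ≠ j ∧ d.1 ∈ S i ∧ d.2 ∈ S j)) :
    ∃ (Ps : Finset Pt) (Ds : Finset Dem),
      Ps ⊆ P ∧
      (∀ d : Dem, d ∈ Ds ↔
        (d.1 ∈ Ps ∧ d.2 ∈ Ps ∧ d.1.1 < d.2.1 ∧ ∃ i j, i ≠ j ∧ d.1 ∈ S i ∧ d.2 ∈ S j)) ∧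
      (∀ Q : Finset Pt, MFeasible ↑Ps ↑Ds ↑Q → MFeasible ↑P ↑D ↑Q) ∧
      Ps.card ≤ 8 * ISN ↑Ds := by
  classical
  have hpiex : ∃ pi : Pt → ℕ, ∀ (i : Fin k) (p : Pt), p ∈ S i → pi p = i.val := by
    refine ⟨fun p => if h : ∃ i : Fin k, p ∈ S i then h.choose.val else 0, ?_⟩
    intro i p hp
    have h : ∃ i : Fin k, p ∈ S i := ⟨i, hp⟩
    simp only [dif_pos h]
    by_contra hne
    have hne' : h.choose ≠ i := fun he => hne (by rw [he])
    exact Finset.disjoint_left.mp (hdisj _ _ hne') h.choose_spec hp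
  obtain ⟨pi, hpi⟩ := hpiex
  have hmemP : ∀ p ∈ P, ∃ i, p ∈ S i := by
    intro p hp
    have h1 : (p : Pt) ∈ (↑P : Set Pt) := hp
    rw [hP] at h1
    simpa using h1
  have hdiff : ∀ {p q : Pt}, (∃ i j, i ≠ j ∧ p ∈ S i ∧ q ∈ S j) → pi p ≠ pi q := by
    rintro p q ⟨i, j, hij, hpi', hqj⟩
    rw [hpi i p hpi', hpi j q hqj]
    exact fun h => hij (Fin.val_injective h)
  have hdiff' : ∀ {p q : Pt}, p ∈ P → q ∈ P → pi p ≠ pi q →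
      ∃ i j, i ≠ j ∧ p ∈ S i ∧ q ∈ S j := by
    intro p q hp hq hne
    obtain ⟨i, hi⟩ := hmemP p hp
    obtain ⟨j, hj⟩ := hmemP q hq
    refine ⟨i, j, ?_, hi, hj⟩
    rintro rfl
    rw [hpi i p hi, hpi i q hj] at hne
    exact hne rfl
  set Ps := P.filter (KeepP pi P) with hPsdef
  set Ds := D.filter (fun d => d.1 ∈ Ps ∧ d.2 ∈ Ps) with hDsdef
  have hPsP : Ps ⊆ P := Finset.filter_subset _ _
  have hDs' : ∀ d : Dem, d ∈ Ds ↔ (d.1 ∈ Ps ∧ d.2 ∈ Ps ∧ d.1.1 < d.2.1 ∧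
      ∃ i j, i ≠ j ∧ d.1 ∈ S i ∧ d.2 ∈ S j) := by
    intro d
    constructor
    · intro hd
      obtain ⟨hdD, h1, h2⟩ := Finset.mem_filter.mp hd
      obtain ⟨_, _, hx, hij⟩ := (hD d).mp hdD
      exact ⟨h1, h2, hx, hij⟩
    · rintro ⟨h1, h2, hx, hij⟩
      exact Finset.mem_filter.mpr ⟨(hD d).mpr ⟨hPsP h1, hPsP h2, hx, hij⟩, h1, h2⟩
  have key : ∀ p ∈ P, ∀ q ∈ P, p.1 ≠ q.1 → pi p ≠ pi q →
      ∃ r s : Pt, r ∈ Ps ∧ s ∈ Ps ∧ r.1 = p.1 ∧ s.1 = q.1 ∧ pi s ≠ pi r ∧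
        min p.2 q.2 ≤ r.2 ∧ r.2 ≤ max p.2 q.2 ∧ min q.2 r.2 ≤ s.2 ∧ s.2 ≤ max q.2 r.2 := by
    intro p hp q hq hx hpq
    obtain ⟨r, hrP, hrK, hrx, hr1, hr2, hrq⟩ := exists_keep pi P hp hq hx hpq
    have hrmem : r ∈ Ps := Finset.mem_filter.mpr ⟨hrP, hrK⟩
    have hqrx : q.1 ≠ r.1 := by rw [hrx]; exact hx.symm
    obtain ⟨s, hsP, hsK, hsx, hs1, hs2, hsr⟩ := exists_keep pi P hq hrP hqrx hrq.symm
    exact ⟨r, s, hrmem, Finset.mem_filter.mpr ⟨hsP, hsK⟩, hrx, hsx, hsr, hr1, hr2, hs1, hs2⟩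
  refine ⟨Ps, Ds, hPsP, hDs', ?_, ?_⟩
  · -- transfer
    intro Q hQ d hd
    have hdD : d ∈ D := hd
    obtain ⟨hp, hq, hx, hij⟩ := (hD d).mp hdD
    obtain ⟨r, s, hrPs, hsPs, hrx, hsx, hsr, hr1, hr2, hs1, hs2⟩ :=
      key d.1 hp d.2 hq (ne_of_lt hx) (hdiff hij)
    have hrsD : (r, s) ∈ Ds := by
      refine (hDs' (r, s)).mpr ⟨hrPs, hsPs, ?_, ?_⟩
      · show r.1 < s.1
        rw [hrx, hsx]; exact hx
      · exact hdiff' (hPsP hrPs) (hPsP hsPs) (Ne.symm hsr)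
    have hsub : (↑Ps ∪ ↑Q : Set Pt) ⊆ (↑P ∪ ↑Q : Set Pt) := by
      apply Set.union_subset_union_left
      exact_mod_cast Finset.coe_subset.mpr hPsP
    have hconn : MConnected (↑P ∪ ↑Q) r s := mconn_mono hsub (hQ (r, s) hrsD)
    have hbet1 : min d.1.2 s.2 ≤ r.2 ∧ r.2 ≤ max d.1.2 s.2 := between_trans hr1 hr2 hs1 hs2
    have hbet2 : min d.1.2 d.2.2 ≤ s.2 ∧ s.2 ≤ max d.1.2 d.2.2 := by
      constructor
      · exact le_trans (le_min (min_le_right _ _) hr1) hs1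
      · exact le_trans hs2 (max_le (le_max_right _ _) hr2)
    have hy1 : |d.1.2 - r.2| + |r.2 - s.2| = |d.1.2 - s.2| := abs_add_between hbet1.1 hbet1.2
    have hy2 : |d.1.2 - s.2| + |s.2 - d.2.2| = |d.1.2 - d.2.2| :=
      abs_add_between hbet2.1 hbet2.2
    have d1 : dist1 d.1 r + dist1 r s = dist1 d.1 s := by
      simp only [dist1, hrx, sub_self, abs_zero]
      linarith
    have d2 : dist1 d.1 s + dist1 s d.2 = dist1 d.1 d.2 := by
      simp only [dist1, hsx, sub_self, abs_zero]
      linarith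
    have hpS : (d.1 : Pt) ∈ (↑P ∪ ↑Q : Set Pt) := Or.inl hp
    have hqS : (d.2 : Pt) ∈ (↑P ∪ ↑Q : Set Pt) := Or.inl hq
    exact mconn_append hqS (Or.inl hsx) d2 (mconn_prepend hpS (Or.inl hrx.symm) d1 hconn)
  · -- cardinality bound
    have hwitex : ∀ z : Pt, ∃ w : Pt, z ∈ Ps → w ∈ P ∧ w.1 ≠ z.1 ∧ pi w ≠ pi z ∧
        ∀ z' ∈ P, z'.1 = z.1 → min z.2 w.2 < z'.2 → z'.2 < max z.2 w.2 → pi z' = pi w := by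
      intro z
      by_cases hz : z ∈ Ps
      · obtain ⟨w, hwP, h1, h2, h3⟩ := (Finset.mem_filter.mp hz).2
        exact ⟨w, fun _ => ⟨hwP, h1, h2, h3⟩⟩
      · exact ⟨z, fun h => absurd h hz⟩
    choose wit hwit using hwitex
    have hszex : ∀ z : Pt, ∃ s : Pt, z ∈ Ps → s ∈ Ps ∧ s.1 = (wit z).1 ∧
        min (wit z).2 z.2 ≤ s.2 ∧ s.2 ≤ max (wit z).2 z.2 ∧ pi s ≠ pi z := by
      intro z
      by_cases hz : z ∈ Ps
      · obtain ⟨hwP, hwx, hwpi, hwall⟩ := hwit z hz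
        obtain ⟨s, hsP, hsK, hsx, hs1, hs2, hspi⟩ :=
          exists_keep pi P hwP (hPsP hz) hwx hwpi
        exact ⟨s, fun _ => ⟨Finset.mem_filter.mpr ⟨hsP, hsK⟩, hsx, hs1, hs2, hspi⟩⟩
      · exact ⟨z, fun h => absurd h hz⟩
    choose sz hsz using hszex
    have hszx : ∀ z ∈ Ps, (sz z).1 ≠ z.1 := by
      intro z hz
      rw [(hsz z hz).2.1]
      exact (hwit z hz).2.1
    have hnd : ∀ z ∈ Ps, min z.2 (sz z).2 < max z.2 (sz z).2 := by
      intro z hz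
      have hne : z ≠ sz z := fun he => hszx z hz (by rw [← he])
      exact min_lt_max.mpr (hY z (hPsP hz) (sz z) (hPsP (hsz z hz).1) hne)
    have hwin : ∀ z ∈ Ps, min z.2 (wit z).2 ≤ min z.2 (sz z).2 ∧
        max z.2 (sz z).2 ≤ max z.2 (wit z).2 := by
      intro z hz
      obtain ⟨_, _, hs1, hs2, _⟩ := hsz z hz
      rw [min_comm (wit z).2 z.2] at hs1
      rw [max_comm (wit z).2 z.2] at hs2
      exact ⟨le_min (min_le_left _ _) hs1, max_le (le_max_left _ _) hs2⟩
    -- bounded above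
    have hbdd : BddAbove {n | ∃ D' : Finset Dem, ↑D' ⊆ (↑Ds : Set Dem) ∧ D'.card = n ∧
        (LeftBIS D' ∨ RightBIS D')} := by
      refine ⟨Ds.card, ?_⟩
      rintro n ⟨D', hsub, rfl, _⟩
      exact Finset.card_le_card (Finset.coe_subset.mp hsub)
    -- generic packing per fiber
    have hGex : ∀ (Z : Finset Pt), Z ⊆ Ps → ∀ x₀ : ℝ,
        ∃ G : Finset Pt, G ⊆ Z.filter (fun z => z.1 = x₀) ∧
          (Z.filter (fun z => z.1 = x₀)).card ≤ 4 * G.card ∧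
          ∀ i ∈ G, ∀ j ∈ G, i ≠ j →
            max i.2 (sz i).2 ≤ min j.2 (sz j).2 ∨ max j.2 (sz j).2 ≤ min i.2 (sz i).2 := by
      intro Z hZ x₀
      apply pack (fun z => min z.2 (sz z).2) (fun z => max z.2 (sz z).2)
      · intro i hi
        exact hnd i (hZ (Finset.mem_filter.mp hi).1)
      · intro Y
        have hss : (Z.filter (fun z => z.1 = x₀)).filter
            (fun z => min z.2 (sz z).2 < Y ∧ Y < max z.2 (sz z).2) ⊆
            Ps.filter (fun z => z.1 = x₀ ∧ min z.2 (wit z).2 < Y ∧ Y < max z.2 (wit z).2) := by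
          intro z hz
          obtain ⟨hz1, hz2, hz3⟩ := Finset.mem_filter.mp hz
          obtain ⟨hz4, hz5⟩ := Finset.mem_filter.mp hz1
          have hzPs := hZ hz4
          refine Finset.mem_filter.mpr ⟨hzPs, hz5, ?_, ?_⟩
          · exact lt_of_le_of_lt (hwin z hzPs).1 hz2
          · exact lt_of_lt_of_le hz3 (hwin z hzPs).2
        refine le_trans (Finset.card_le_card hss) ?_
        exact depth_le_four P Ps pi hY hPsP wit (fun z hz => (hwit z hz).2.2.1)
          (fun z hz => (hwit z hz).2.2.2) x₀ Y
    -- demands for kept points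
    have hdem : ∀ z ∈ Ps, pi (sz z) ≠ pi z → True := fun _ _ _ => trivial
    set ZL := Ps.filter (fun z => z.1 < (sz z).1) with hZLdef
    set ZR := Ps.filter (fun z => ¬ z.1 < (sz z).1) with hZRdef
    have hsplit : ZL.card + ZR.card = Ps.card :=
      Finset.card_filter_add_card_filter_not _
    have hdemL : ∀ z ∈ ZL, ((z, sz z) : Dem) ∈ Ds := by
      intro z hz
      obtain ⟨hzPs, hzlt⟩ := Finset.mem_filter.mp hz
      refine (hDs' (z, sz z)).mpr ⟨hzPs, (hsz z hzPs).1, hzlt, ?_⟩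
      exact hdiff' (hPsP hzPs) (hPsP (hsz z hzPs).1) (Ne.symm (hsz z hzPs).2.2.2.2)
    have hdemR : ∀ z ∈ ZR, ((sz z, z) : Dem) ∈ Ds := by
      intro z hz
      obtain ⟨hzPs, hzlt⟩ := Finset.mem_filter.mp hz
      have : (sz z).1 < z.1 := lt_of_le_of_ne (not_lt.mp hzlt) (hszx z hzPs)
      refine (hDs' (sz z, z)).mpr ⟨(hsz z hzPs).1, hzPs, this, ?_⟩
      exact hdiff' (hPsP (hsz z hzPs).1) (hPsP hzPs) (hsz z hzPs).2.2.2.2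
    have hLbound : ZL.card ≤ 4 * ISN ↑Ds := by
      have hZLPs : ZL ⊆ Ps := Finset.filter_subset _ _
      choose G hG1 hG2 hG3 using hGex ZL hZLPs
      set X := ZL.image (fun z => z.1) with hXdef
      set DL := X.biUnion (fun x₀ => (G x₀).image (fun z => ((z, sz z) : Dem))) with hDLdef
      have hGmem : ∀ x₀, ∀ z ∈ G x₀, z ∈ ZL ∧ z.1 = x₀ := by
        intro x₀ z hz
        exact Finset.mem_filter.mp (hG1 x₀ hz)
      have hcardDL : DL.card = ∑ x₀ ∈ X, (G x₀).card := by
        rw [Finset.card_biUnion]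
        · refine Finset.sum_congr rfl ?_
          intro x₀ _
          apply Finset.card_image_of_injOn
          intro a _ b _ hab
          exact (Prod.mk.injEq _ _ _ _).mp hab |>.1
        · intro x₀ _ y₀ _ hxy
          rw [Function.onFun, Finset.disjoint_left]
          rintro d hd1 hd2
          obtain ⟨a, ha, rfl⟩ := Finset.mem_image.mp hd1
          obtain ⟨b, hb, hba⟩ := Finset.mem_image.mp hd2
          have hb1 : b = a := (Prod.mk.injEq _ _ _ _).mp hba |>.1
          rw [hb1] at hb
          exact hxy ((hGmem x₀ a ha).2.symm.trans (hGmem y₀ a hb).2)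
      have hcards : ZL.card ≤ 4 * DL.card := by
        have h1 : ZL.card = ∑ x₀ ∈ X, (ZL.filter (fun z => z.1 = x₀)).card :=
          Finset.card_eq_sum_card_fiberwise (fun z hz => Finset.mem_image_of_mem _ hz)
        rw [h1, hcardDL, Finset.mul_sum]
        exact Finset.sum_le_sum (fun x₀ _ => hG2 x₀)
      have hmem : DL.card ∈ {n | ∃ D' : Finset Dem, ↑D' ⊆ (↑Ds : Set Dem) ∧ D'.card = n ∧
          (LeftBIS D' ∨ RightBIS D')} := by
        refine ⟨DL, ?_, rfl, Or.inl ?_⟩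
        · intro d hd
          obtain ⟨x₀, _, hd2⟩ := Finset.mem_biUnion.mp hd
          obtain ⟨z, hz, rfl⟩ := Finset.mem_image.mp hd2
          exact hdemL z (hGmem x₀ z hz).1
        · intro d hd e he hde
          obtain ⟨x₀, _, hd2⟩ := Finset.mem_biUnion.mp hd
          obtain ⟨z, hz, rfl⟩ := Finset.mem_image.mp hd2
          obtain ⟨y₀, _, he2⟩ := Finset.mem_biUnion.mp he
          obtain ⟨z', hz', rfl⟩ := Finset.mem_image.mp he2
          by_cases hxx : z.1 = z'.1
          · have hx0 : x₀ = y₀ := ((hGmem x₀ z hz).2.symm.trans (hxx.trans (hGmem y₀ z' hz').2))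
            rw [← hx0] at hz'
            have hzne : z ≠ z' := fun h => hde (by rw [h])
            have hsep := hG3 x₀ z hz z' hz' hzne
            apply vseg_ss
            right
            simpa using hsep
          · exact vseg_ss (Or.inl hxx)
      calc ZL.card ≤ 4 * DL.card := hcards
        _ ≤ 4 * ISN ↑Ds := by
          have := le_csSup hbdd hmem
          exact Nat.mul_le_mul_left 4 this
    have hRbound : ZR.card ≤ 4 * ISN ↑Ds := by
      have hZRPs : ZR ⊆ Ps := Finset.filter_subset _ _
      choose G hG1 hG2 hG3 using hGex ZR hZRPs
      set X := ZR.image (fun z => z.1) with hXdef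
      set DR := X.biUnion (fun x₀ => (G x₀).image (fun z => ((sz z, z) : Dem))) with hDRdef
      have hGmem : ∀ x₀, ∀ z ∈ G x₀, z ∈ ZR ∧ z.1 = x₀ := by
        intro x₀ z hz
        exact Finset.mem_filter.mp (hG1 x₀ hz)
      have hcardDR : DR.card = ∑ x₀ ∈ X, (G x₀).card := by
        rw [Finset.card_biUnion]
        · refine Finset.sum_congr rfl ?_
          intro x₀ _
          apply Finset.card_image_of_injOn
          intro a _ b _ hab
          exact (Prod.mk.injEq _ _ _ _).mp hab |>.2
        · intro x₀ _ y₀ _ hxy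
          rw [Function.onFun, Finset.disjoint_left]
          rintro d hd1 hd2
          obtain ⟨a, ha, rfl⟩ := Finset.mem_image.mp hd1
          obtain ⟨b, hb, hba⟩ := Finset.mem_image.mp hd2
          have hb1 : b = a := (Prod.mk.injEq _ _ _ _).mp hba |>.2
          rw [hb1] at hb
          exact hxy ((hGmem x₀ a ha).2.symm.trans (hGmem y₀ a hb).2)
      have hcards : ZR.card ≤ 4 * DR.card := by
        have h1 : ZR.card = ∑ x₀ ∈ X, (ZR.filter (fun z => z.1 = x₀)).card :=
          Finset.card_eq_sum_card_fiberwise (fun z hz => Finset.mem_image_of_mem _ hz)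
        rw [h1, hcardDR, Finset.mul_sum]
        exact Finset.sum_le_sum (fun x₀ _ => hG2 x₀)
      have hmem : DR.card ∈ {n | ∃ D' : Finset Dem, ↑D' ⊆ (↑Ds : Set Dem) ∧ D'.card = n ∧
          (LeftBIS D' ∨ RightBIS D')} := by
        refine ⟨DR, ?_, rfl, Or.inr ?_⟩
        · intro d hd
          obtain ⟨x₀, _, hd2⟩ := Finset.mem_biUnion.mp hd
          obtain ⟨z, hz, rfl⟩ := Finset.mem_image.mp hd2
          exact hdemR z (hGmem x₀ z hz).1
        · intro d hd e he hde
          obtain ⟨x₀, _, hd2⟩ := Finset.mem_biUnion.mp hd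
          obtain ⟨z, hz, rfl⟩ := Finset.mem_image.mp hd2
          obtain ⟨y₀, _, he2⟩ := Finset.mem_biUnion.mp he
          obtain ⟨z', hz', rfl⟩ := Finset.mem_image.mp he2
          by_cases hxx : z.1 = z'.1
          · have hx0 : x₀ = y₀ := ((hGmem x₀ z hz).2.symm.trans (hxx.trans (hGmem y₀ z' hz').2))
            rw [← hx0] at hz'
            have hzne : z ≠ z' := fun h => hde (by rw [h])
            have hsep := hG3 x₀ z hz z' hz' hzne
            apply vseg_ss
            right
            rw [min_comm (sz z).2 z.2, max_comm (sz z).2 z.2,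
              min_comm (sz z').2 z'.2, max_comm (sz z').2 z'.2]
            simpa using hsep
          · exact vseg_ss (Or.inl hxx)
      calc ZR.card ≤ 4 * DR.card := hcards
        _ ≤ 4 * ISN ↑Ds := by
          have := le_csSup hbdd hmem
          exact Nat.mul_le_mul_left 4 this
    omega
end

section
/- Let (P,D) be a MinGMConn instance such that no two points of P are horizontally or vertically aligned and such that the undirected graph with vertex set P and edge set D is connected. Then opt(P,D) ≥ |P| − 1. -/
open Finset Relation in
private lemma chainRTG {S : Set Pt} {k : ℕ} (f : Fin (k+1) → Pt)
    (hmem : ∀ i, f i ∈ S) (hal : ∀ i : Fin k, Aligned (f i.castSucc) (f i.succ)) :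
    ReflTransGen (fun a b => a ∈ S ∧ b ∈ S ∧ Aligned a b) (f 0) (f (Fin.last k)) := by
  have key : ∀ j : ℕ, (hj : j ≤ k) →
      ReflTransGen (fun a b => a ∈ S ∧ b ∈ S ∧ Aligned a b) (f 0) (f ⟨j, Nat.lt_succ_of_le hj⟩) := by
    intro j
    induction j with
    | zero =>
      intro _
      have : (⟨0, Nat.lt_succ_of_le (Nat.zero_le k)⟩ : Fin (k+1)) = 0 := by
        ext; simp
      rw [show (⟨0, _⟩ : Fin (k+1)) = 0 from this]
    | succ m ih =>
      intro hj
      refine (ih (le_of_lt hj)).tail ?_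
      have h := hal ⟨m, hj⟩
      have h1 : (Fin.castSucc ⟨m, hj⟩ : Fin (k+1)) = ⟨m, Nat.lt_succ_of_le (le_of_lt hj)⟩ := rfl
      have h2 : (Fin.succ ⟨m, hj⟩ : Fin (k+1)) = ⟨m+1, Nat.lt_succ_of_le hj⟩ := rfl
      rw [h1, h2] at h
      exact ⟨hmem _, hmem _, h⟩
  have := key k le_rfl
  have hlast : (⟨k, Nat.lt_succ_of_le le_rfl⟩ : Fin (k+1)) = Fin.last k := rfl
  rwa [hlast] at this

open Finset Relation in
private lemma boundaryRTG {C A : Finset Pt} {p0 z : Pt} (hA : p0 ∈ A)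
    (h : ReflTransGen (fun a b => b ∈ C ∧ Aligned a b) p0 z) (hz : z ∉ A) :
    ∃ w ∈ A, ∃ y ∈ C, y ∉ A ∧ Aligned w y := by
  induction h with
  | refl => exact absurd hA hz
  | @tail b c h1 h2 ih =>
    by_cases hb : b ∈ A
    · exact ⟨b, hb, c, h2.1, hz, h2.2⟩
    · exact ih hb

open Finset Relation in
private lemma countLemma (C : Finset Pt) (p0 : Pt) (hp0 : p0 ∈ C)
    (hconn : ∀ z ∈ C, ReflTransGen (fun a b => b ∈ C ∧ Aligned a b) p0 z) :
    (C.image Prod.fst).card + (C.image Prod.snd).card ≤ C.card + 1 := by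
  classical
  suffices h : ∀ (k : ℕ) (A : Finset Pt), p0 ∈ A → A ⊆ C → (C \ A).card ≤ k →
      (A.image Prod.fst).card + (A.image Prod.snd).card ≤ A.card + 1 →
      (C.image Prod.fst).card + (C.image Prod.snd).card ≤ C.card + 1 by
    refine h (C \ {p0}).card {p0} (mem_singleton_self p0) (by simpa using hp0) le_rfl ?_
    simp
  intro k
  induction k with
  | zero =>
    intro A hp0A hAC hcard hinv
    have hCA : C ⊆ A := by
      rw [← Finset.sdiff_eq_empty_iff_subset]
      exact Finset.card_eq_zero.mp (Nat.le_zero.mp hcard)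
    rw [Finset.Subset.antisymm hCA hAC]
    exact hinv
  | succ k ih =>
    intro A hp0A hAC hcard hinv
    by_cases hCA : C ⊆ A
    · rw [Finset.Subset.antisymm hCA hAC]
      exact hinv
    · obtain ⟨z, hzC, hzA⟩ := Finset.not_subset.mp hCA
      obtain ⟨w, hwA, y, hyC, hyA, hal⟩ := boundaryRTG hp0A (hconn z hzC) hzA
      have hyCA : y ∈ C \ A := Finset.mem_sdiff.mpr ⟨hyC, hyA⟩
      refine ih (insert y A) (mem_insert_of_mem hp0A) (Finset.insert_subset hyC hAC) ?_ ?_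
      · have hss : C \ insert y A ⊂ C \ A := by
          refine Finset.ssubset_iff_of_subset
            (Finset.sdiff_subset_sdiff le_rfl (Finset.subset_insert y A)) |>.mpr ?_
          exact ⟨y, hyCA, by simp⟩
        have := Finset.card_lt_card hss
        omega
      · have hcardins : (insert y A).card = A.card + 1 := Finset.card_insert_of_notMem hyA
        rw [Finset.image_insert, Finset.image_insert]
        rcases hal with hx | hy
        · have hmem : y.1 ∈ A.image Prod.fst :=
            Finset.mem_image.mpr ⟨w, hwA, hx⟩
          rw [Finset.insert_eq_self.mpr hmem, hcardins]
          have := Finset.card_insert_le y.2 (A.image Prod.snd)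
          omega
        · have hmem : y.2 ∈ A.image Prod.snd :=
            Finset.mem_image.mpr ⟨w, hwA, hy⟩
          rw [Finset.insert_eq_self.mpr hmem, hcardins]
          have := Finset.card_insert_le y.1 (A.image Prod.fst)
          omega

private lemma exists_feasible (P : Finset Pt) (D : Finset Dem) (hinst : IsInstance P D) :
    ∃ Q : Finset Pt, MFeasible ↑P ↑D ↑Q := by
  classical
  refine ⟨D.image (fun d => (d.1.1, d.2.2)), ?_⟩
  intro d hd
  have hd' : d ∈ D := hd
  obtain ⟨hp, hq, _⟩ := hinst d hd'
  refine ⟨2, ![d.1, (d.1.1, d.2.2), d.2], by simp, by simp [Fin.last], ?_, ?_, ?_⟩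
  · intro i
    fin_cases i
    · exact Set.mem_union_left _ (by exact_mod_cast hp)
    · refine Set.mem_union_right _ ?_
      simp only [Finset.coe_image, Set.mem_image, Finset.mem_coe]
      exact ⟨d, hd', rfl⟩
    · exact Set.mem_union_left _ (by exact_mod_cast hq)
  · intro i
    fin_cases i
    · exact Or.inl rfl
    · exact Or.inr rfl
  · rw [Fin.sum_univ_two]
    show dist1 d.1 (d.1.1, d.2.2) + dist1 (d.1.1, d.2.2) d.2 = dist1 d.1 d.2
    simp [dist1]
    ring

open Finset Relation in
private lemma main_bound (P Q : Finset Pt) (D : Finset Dem)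
    (hinst : IsInstance P D)
    (halign : ∀ p ∈ P, ∀ q ∈ P, p ≠ q → p.1 ≠ q.1 ∧ p.2 ≠ q.2)
    (hconn : (demandGraph P D).Connected)
    (hfeas : MFeasible ↑P ↑D ↑Q) : P.card - 1 ≤ Q.card := by
  classical
  obtain ⟨⟨p0, hp0⟩⟩ := hconn.nonempty
  set S : Set Pt := ↑P ∪ ↑Q with hS
  set step : Pt → Pt → Prop := fun a b => a ∈ S ∧ b ∈ S ∧ Aligned a b with hstep
  have hsymm : Symmetric step := fun a b h => ⟨h.2.1, h.1, h.2.2.imp Eq.symm Eq.symm⟩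
  -- demand adjacency gives reachability
  have adjstep : ∀ a b : {x : Pt // x ∈ P}, (demandGraph P D).Adj a b →
      ReflTransGen step a.1 b.1 := by
    rintro a b ⟨hne, hD | hD⟩
    · obtain ⟨k, f, h0, hl, hmem, hal, -⟩ := hfeas (a.1, b.1) hD
      have := chainRTG f hmem hal
      rwa [h0, hl] at this
    · obtain ⟨k, f, h0, hl, hmem, hal, -⟩ := hfeas (b.1, a.1) hD
      have := chainRTG f hmem hal
      rw [h0, hl] at this
      exact (@ReflTransGen.stdSymm _ step ⟨fun a b h => hsymm h⟩).symm _ _ this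
  have hreachP : ∀ p (hp : p ∈ P), ReflTransGen step p0 p := by
    intro p hp
    have hr : (demandGraph P D).Reachable ⟨p0, hp0⟩ ⟨p, hp⟩ := hconn.preconnected _ _
    rw [SimpleGraph.reachable_iff_reflTransGen] at hr
    have : ∀ (a b : {x : Pt // x ∈ P}), ReflTransGen (demandGraph P D).Adj a b →
        ReflTransGen step a.1 b.1 := by
      intro a b h
      induction h with
      | refl => exact .refl
      | tail h1 h2 ih => exact ih.trans (adjstep _ _ h2)
    exact this _ _ hr
  set C : Finset Pt := (P ∪ Q).filter (fun z => ReflTransGen step p0 z) with hC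
  have hmemC : ∀ z, z ∈ C ↔ (z ∈ P ∪ Q ∧ ReflTransGen step p0 z) := by
    intro z; simp [hC]
  have hSPQ : ∀ z, z ∈ S → z ∈ P ∪ Q := by
    intro z hz
    rcases hz with h | h
    · exact Finset.mem_union_left _ h
    · exact Finset.mem_union_right _ h
  have hp0C : p0 ∈ C := (hmemC p0).mpr ⟨Finset.mem_union_left _ hp0, .refl⟩
  have hPC : P ⊆ C := fun p hp => (hmemC p).mpr ⟨Finset.mem_union_left _ hp, hreachP p hp⟩
  have hCconn : ∀ z ∈ C, ReflTransGen (fun a b => b ∈ C ∧ Aligned a b) p0 z := by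
    intro z hz
    have hz' := ((hmemC z).mp hz).2
    clear hz
    induction hz' with
    | refl => exact .refl
    | @tail b c h1 h2 ih =>
      exact ih.tail ⟨(hmemC c).mpr ⟨hSPQ c h2.2.1, h1.tail h2⟩, h2.2.2⟩
  have hcount := countLemma C p0 hp0C hCconn
  -- lower bound on value counts from P
  have hxP : (P.image Prod.fst).card = P.card := by
    rw [Finset.card_image_of_injOn]
    intro p hp q hq hpq
    by_contra hne
    exact (halign p hp q hq hne).1 hpq
  have hyP : (P.image Prod.snd).card = P.card := by
    rw [Finset.card_image_of_injOn]
    intro p hp q hq hpq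
    by_contra hne
    exact (halign p hp q hq hne).2 hpq
  have hx : P.card ≤ (C.image Prod.fst).card := by
    rw [← hxP]; exact Finset.card_le_card (Finset.image_subset_image hPC)
  have hy : P.card ≤ (C.image Prod.snd).card := by
    rw [← hyP]; exact Finset.card_le_card (Finset.image_subset_image hPC)
  have hCcard : C.card ≤ P.card + Q.card :=
    le_trans (Finset.card_le_card (Finset.filter_subset _ _)) (Finset.card_union_le P Q)
  omega

/-- If no two input points are horizontally or vertically aligned and the demand
graph is connected, then `opt(P,D) ≥ |P| − 1`. -/
theorem stmt16 (P : Finset Pt) (D : Finset Dem)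
    (hinst : IsInstance P D)
    (halign : ∀ p ∈ P, ∀ q ∈ P, p ≠ q → p.1 ≠ q.1 ∧ p.2 ≠ q.2)
    (hconn : (demandGraph P D).Connected) :
    P.card - 1 ≤ optN ↑P ↑D := by
  classical
  obtain ⟨Q0, hQ0⟩ := exists_feasible P D hinst
  have hne : {n | ∃ Q : Finset Pt, MFeasible ↑P ↑D ↑Q ∧ Q.card = n}.Nonempty :=
    ⟨Q0.card, Q0, hQ0, rfl⟩
  obtain ⟨Q, hfeas, hcard⟩ := Nat.sInf_mem hne
  rw [optN, ← hcard]
  exact main_bound P Q D hinst halign hconn hfeas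
end

section
/- For any finite set Y ⊆ ℝ² and any point p ∈ Y, the number of connected components of the Manhattan graph G_{Y \ {p}} differs from the number of connected components of the Manhattan graph G_Y by at most one. -/
section Stmt17Aux
open SimpleGraph

/-- Inclusion graph homomorphism from the Manhattan graph on `Y.erase p` to that on `Y`. -/
def mhom (Y : Finset Pt) (p : Pt) : manhattanGraph (Y.erase p) →g manhattanGraph Y where
  toFun v := ⟨v.1, Finset.mem_of_mem_erase v.2⟩
  map_rel' := by
    intro a b h
    refine ⟨fun he => h.1 ?_, h.2⟩
    have h2 : a.1 = b.1 := Subtype.mk.inj he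
    exact Subtype.ext h2

lemma stmt17_walkLift (Y : Finset Pt) (p : Pt) :
    ∀ {a b : {x : Pt // x ∈ Y}} (W : (manhattanGraph Y).Walk a b),
      (∀ v ∈ W.support, v.1 ≠ p) →
      ∀ (ha : a.1 ≠ p) (hb : b.1 ≠ p),
      (manhattanGraph (Y.erase p)).Reachable
        ⟨a.1, Finset.mem_erase.mpr ⟨ha, a.2⟩⟩ ⟨b.1, Finset.mem_erase.mpr ⟨hb, b.2⟩⟩ := by
  intro a b W
  induction W with
  | nil => intro _ _ _; exact Reachable.refl _
  | @cons u v w h W ih =>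
    intro hW hu hw
    have hv : v.1 ≠ p := hW v (by simp [SimpleGraph.Walk.support_cons, W.start_mem_support])
    have hadj : (manhattanGraph (Y.erase p)).Adj
        ⟨u.1, Finset.mem_erase.mpr ⟨hu, u.2⟩⟩ ⟨v.1, Finset.mem_erase.mpr ⟨hv, v.2⟩⟩ := by
      refine ⟨fun he => h.1 ?_, h.2⟩
      have h2 : u.1 = v.1 := Subtype.mk.inj he
      exact Subtype.ext h2
    exact hadj.reachable.trans (ih (fun x hx => hW x (by simp [SimpleGraph.Walk.support_cons, hx])) hv hw)

lemma stmt17_reachP (Y : Finset Pt) (p : Pt) (hp : p ∈ Y) :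
    ∀ {a b : {x : Pt // x ∈ Y}} (_ : (manhattanGraph Y).Walk a b),
      b = ⟨p, hp⟩ → ∀ (ha : a.1 ≠ p),
      ∃ w : {x : Pt // x ∈ Y}, (manhattanGraph Y).Adj w ⟨p, hp⟩ ∧ ∃ hw : w.1 ≠ p,
        (manhattanGraph (Y.erase p)).Reachable
          ⟨a.1, Finset.mem_erase.mpr ⟨ha, a.2⟩⟩ ⟨w.1, Finset.mem_erase.mpr ⟨hw, w.2⟩⟩ := by
  intro a b W
  induction W with
  | nil =>
    intro hb ha
    exact absurd (congrArg Subtype.val hb) ha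
  | @cons u v w h W ih =>
    intro hb hu
    by_cases hv : v = ⟨p, hp⟩
    · refine ⟨u, ?_, hu, Reachable.refl _⟩
      rw [← hv]; exact h
    · have hv' : v.1 ≠ p := fun he => hv (Subtype.ext he)
      obtain ⟨w', hadj, hw', hr⟩ := ih hb hv'
      have hadj2 : (manhattanGraph (Y.erase p)).Adj
          ⟨u.1, Finset.mem_erase.mpr ⟨hu, u.2⟩⟩ ⟨v.1, Finset.mem_erase.mpr ⟨hv', v.2⟩⟩ := by
        refine ⟨fun he => h.1 ?_, h.2⟩
        exact Subtype.ext (Subtype.mk.inj he)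
      exact ⟨w', hadj, hw', hadj2.reachable.trans hr⟩

end Stmt17Aux

/-- Removing a point from a finite point set changes the number of connected
components of its Manhattan graph by at most one. -/
theorem stmt17 (Y : Finset Pt) (p : Pt) (hp : p ∈ Y) :
    Nat.card (manhattanGraph (Y.erase p)).ConnectedComponent ≤
      Nat.card (manhattanGraph Y).ConnectedComponent + 1 ∧
    Nat.card (manhattanGraph Y).ConnectedComponent ≤
      Nat.card (manhattanGraph (Y.erase p)).ConnectedComponent + 1 := by
  classical
  set G := manhattanGraph Y with hG
  set G' := manhattanGraph (Y.erase p) with hG'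
  set P : {x : Pt // x ∈ Y} := ⟨p, hp⟩ with hP
  set φ : G'.ConnectedComponent → G.ConnectedComponent :=
    SimpleGraph.ConnectedComponent.map (mhom Y p) with hφ
  haveI : Finite G.ConnectedComponent :=
    Finite.of_surjective G.connectedComponentMk (fun c => c.exists_rep)
  haveI : Finite G'.ConnectedComponent :=
    Finite.of_surjective G'.connectedComponentMk (fun c => c.exists_rep)
  -- every G'-component mapping into the component of P contains a G-neighbor of P
  have keyP : ∀ D : G'.ConnectedComponent, φ D = G.connectedComponentMk P →
      ∃ w : {x : Pt // x ∈ Y}, G.Adj w P ∧ ∃ hw : w.1 ≠ p,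
        G'.connectedComponentMk ⟨w.1, Finset.mem_erase.mpr ⟨hw, w.2⟩⟩ = D := by
    intro D hD
    obtain ⟨v, hv⟩ := D.exists_rep
    replace hv : G'.connectedComponentMk v = D := hv
    have hvp : ((mhom Y p) v).1 ≠ p := fun h => (Finset.mem_erase.mp v.2).1 h
    have hreach : G.Reachable ((mhom Y p) v) P := by
      rw [← SimpleGraph.ConnectedComponent.eq]
      rw [← hv, hφ, SimpleGraph.ConnectedComponent.map_mk] at hD
      exact hD
    obtain ⟨W⟩ := hreach
    obtain ⟨w, hadj, hw, hr⟩ := stmt17_reachP Y p hp W rfl hvp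
    refine ⟨w, hadj, hw, ?_⟩
    have e1 : (⟨((mhom Y p) v).1, Finset.mem_erase.mpr ⟨hvp, ((mhom Y p) v).2⟩⟩ :
        {x : Pt // x ∈ Y.erase p}) = v := Subtype.ext rfl
    rw [e1] at hr
    exact (SimpleGraph.ConnectedComponent.sound hr.symm).trans hv
  -- fibers over components different from that of P are singletons
  have keyNE : ∀ D D' : G'.ConnectedComponent, φ D = φ D' →
      φ D ≠ G.connectedComponentMk P → D = D' := by
    intro D D' hDD' hne
    obtain ⟨v, hv⟩ := D.exists_rep
    replace hv : G'.connectedComponentMk v = D := hv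
    obtain ⟨v', hv'⟩ := D'.exists_rep
    replace hv' : G'.connectedComponentMk v' = D' := hv'
    have hmk : G.connectedComponentMk ((mhom Y p) v) =
        G.connectedComponentMk ((mhom Y p) v') := by
      rw [← SimpleGraph.ConnectedComponent.map_mk (mhom Y p) v,
          ← SimpleGraph.ConnectedComponent.map_mk (mhom Y p) v', hv, hv']
      exact hDD'
    obtain ⟨W⟩ := SimpleGraph.ConnectedComponent.eq.mp hmk
    have hsupp : ∀ x ∈ W.support, x.1 ≠ p := by
      intro x hx hxp
      have hxP : x = P := Subtype.ext hxp
      subst hxP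
      have hre : G.Reachable ((mhom Y p) v) P := ⟨W.takeUntil P hx⟩
      apply hne
      rw [← hv, hφ, SimpleGraph.ConnectedComponent.map_mk]
      exact SimpleGraph.ConnectedComponent.sound hre
    have hvp : ((mhom Y p) v).1 ≠ p := fun h => (Finset.mem_erase.mp v.2).1 h
    have hvp' : ((mhom Y p) v').1 ≠ p := fun h => (Finset.mem_erase.mp v'.2).1 h
    have hr := stmt17_walkLift Y p W hsupp hvp hvp'
    have e1 : (⟨((mhom Y p) v).1, Finset.mem_erase.mpr ⟨hvp, ((mhom Y p) v).2⟩⟩ :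
        {x : Pt // x ∈ Y.erase p}) = v := Subtype.ext rfl
    have e2 : (⟨((mhom Y p) v').1, Finset.mem_erase.mpr ⟨hvp', ((mhom Y p) v').2⟩⟩ :
        {x : Pt // x ∈ Y.erase p}) = v' := Subtype.ext rfl
    rw [e1, e2] at hr
    rw [← hv, ← hv']
    exact SimpleGraph.ConnectedComponent.sound hr
  constructor
  · -- injection ψ : G'.CC → G.CC ⊕ Unit
    set cond : G'.ConnectedComponent → Prop := fun D =>
      φ D = G.connectedComponentMk P ∧
        ∃ v, G'.connectedComponentMk v = D ∧ v.1.1 = p.1 with hcond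
    set ψ : G'.ConnectedComponent → G.ConnectedComponent ⊕ Unit := fun D =>
      if cond D then Sum.inr () else Sum.inl (φ D) with hψ
    have hinj : Function.Injective ψ := by
      intro D D' h
      simp only [hψ] at h
      by_cases hD : cond D <;> by_cases hD' : cond D'
      · -- both contain a vertex vertically aligned with p
        obtain ⟨-, v, hv, hvx⟩ := hD
        obtain ⟨-, v', hv', hvx'⟩ := hD'
        rw [← hv, ← hv']
        by_cases hvv : v = v'
        · rw [hvv]
        · exact SimpleGraph.ConnectedComponent.sound
            (SimpleGraph.Adj.reachable ⟨hvv, Or.inl (hvx.trans hvx'.symm)⟩)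
      · rw [if_pos hD, if_neg hD'] at h; exact absurd h (by simp)
      · rw [if_neg hD, if_pos hD'] at h; exact absurd h (by simp)
      · -- both map to the same component
        rw [if_neg hD, if_neg hD'] at h
        replace h : φ D = φ D' := Sum.inl.inj h
        by_cases hcomp : φ D = G.connectedComponentMk P
        · -- both contain a neighbor of p horizontally aligned with p
          obtain ⟨w, hadj, hw, hmk⟩ := keyP D hcomp
          obtain ⟨w', hadj', hw', hmk'⟩ := keyP D' (h ▸ hcomp)
          have hwy : w.1.2 = p.2 := by
            rcases hadj.2 with h1 | h2
            · exact absurd ⟨hcomp, ⟨_, hmk, h1⟩⟩ hD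
            · exact h2
          have hwy' : w'.1.2 = p.2 := by
            rcases hadj'.2 with h1 | h2
            · exact absurd ⟨h ▸ hcomp, ⟨_, hmk', h1⟩⟩ hD'
            · exact h2
          rw [← hmk, ← hmk']
          by_cases hww : (⟨w.1, Finset.mem_erase.mpr ⟨hw, w.2⟩⟩ :
              {x : Pt // x ∈ Y.erase p}) = ⟨w'.1, Finset.mem_erase.mpr ⟨hw', w'.2⟩⟩
          · rw [hww]
          · exact SimpleGraph.ConnectedComponent.sound
              (SimpleGraph.Adj.reachable ⟨hww, Or.inr (hwy.trans hwy'.symm)⟩)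
        · exact keyNE D D' h hcomp
    calc Nat.card G'.ConnectedComponent
        ≤ Nat.card (G.ConnectedComponent ⊕ Unit) :=
          Nat.card_le_card_of_injective ψ hinj
      _ = Nat.card G.ConnectedComponent + 1 := by
          rw [Nat.card_sum]; simp
  · -- surjection σ : G'.CC ⊕ Unit → G.CC
    set σ : G'.ConnectedComponent ⊕ Unit → G.ConnectedComponent := fun x =>
      match x with
      | Sum.inl D => φ D
      | Sum.inr _ => G.connectedComponentMk P
      with hσ
    have hsurj : Function.Surjective σ := by
      intro C
      obtain ⟨v, hv⟩ := C.exists_rep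
      replace hv : G.connectedComponentMk v = C := hv
      by_cases hvp : v.1 = p
      · refine ⟨Sum.inr (), ?_⟩
        have hvP : v = P := Subtype.ext hvp
        show G.connectedComponentMk P = C
        rw [← hv, hvP]
      · refine ⟨Sum.inl (G'.connectedComponentMk ⟨v.1, Finset.mem_erase.mpr ⟨hvp, v.2⟩⟩), ?_⟩
        show φ (G'.connectedComponentMk ⟨v.1, Finset.mem_erase.mpr ⟨hvp, v.2⟩⟩) = C
        rw [hφ, SimpleGraph.ConnectedComponent.map_mk, ← hv]
        congr 1
    calc Nat.card G.ConnectedComponent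
        ≤ Nat.card (G'.ConnectedComponent ⊕ Unit) :=
          Nat.card_le_card_of_surjective σ hsurj
      _ = Nat.card G'.ConnectedComponent + 1 := by
          rw [Nat.card_sum]; simp
end

section
/- Let (P,D) be a MinGMConn instance, let Q be a feasible solution for (P,D), and let C ⊆ ℝ² be an axis-aligned rectangle (a product of two intervals). Then Q ∩ C is a feasible solution for the instance (P ∩ C, D ∩ (C × C)). Consequently, for any finite family C₁,…,C_m of pairwise disjoint axis-aligned rectangles, opt(P,D) ≥ Σ_{i=1}^{m} opt(P ∩ C_i, D ∩ (C_i × C_i)). -/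
section Aux

lemma dist1_triangle (a b c : Pt) : dist1 a c ≤ dist1 a b + dist1 b c := by
  have h1 := abs_sub_le a.1 b.1 c.1
  have h2 := abs_sub_le a.2 b.2 c.2
  simp only [dist1]; linarith

lemma dist1_self (a : Pt) : dist1 a a = 0 := by simp [dist1]

lemma between_of_abs_eq {p z q : ℝ} (h : |p - z| + |z - q| = |p - q|) :
    min p q ≤ z ∧ z ≤ max p q := by
  have h1 := le_abs_self (p - z)
  have h2 := neg_abs_le (p - z)
  have h3 := le_abs_self (z - q)
  have h4 := neg_abs_le (z - q)
  rcases le_total p q with hpq | hpq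
  · rw [min_eq_left hpq, max_eq_right hpq]
    have habs : |p - q| = q - p := by
      rw [abs_sub_comm]; exact abs_of_nonneg (by linarith)
    constructor <;> linarith
  · rw [min_eq_right hpq, max_eq_left hpq]
    have habs : |p - q| = p - q := abs_of_nonneg (by linarith)
    constructor <;> linarith

lemma path_mem_rect {k : ℕ} (f : Fin (k + 1) → Pt)
    (hsum : (∑ i : Fin k, dist1 (f i.castSucc) (f i.succ)) = dist1 (f 0) (f (Fin.last k))) :
    ∀ i, f i ∈ Rect (f 0) (f (Fin.last k)) := by
  set F : ℕ → Pt := fun n => f ⟨min n k, Nat.lt_succ_of_le (min_le_right n k)⟩ with hF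
  set g : ℕ → ℝ := fun n => dist1 (F n) (F (n + 1)) with hg
  have hFeq : ∀ (n : ℕ) (hn : n ≤ k), F n = f ⟨n, Nat.lt_succ_of_le hn⟩ := by
    intro n hn
    simp only [hF]
    congr 1
    exact Fin.ext (min_eq_left hn)
  have hconv : (∑ i : Fin k, dist1 (f i.castSucc) (f i.succ)) = ∑ n ∈ Finset.range k, g n := by
    rw [← Fin.sum_univ_eq_sum_range]
    apply Finset.sum_congr rfl
    intro i _
    simp only [hg]
    rw [hFeq i.val (le_of_lt i.isLt), hFeq (i.val + 1) i.isLt]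
    rfl
  have hchain : ∀ a b : ℕ, a ≤ b → dist1 (F a) (F b) ≤ ∑ n ∈ Finset.Ico a b, g n := by
    intro a b hab
    induction b, hab using Nat.le_induction with
    | base => simp [dist1_self]
    | succ b hb ih =>
      have tri := dist1_triangle (F a) (F b) (F (b + 1))
      rw [Finset.sum_Ico_succ_top hb]
      have : g b = dist1 (F b) (F (b + 1)) := rfl
      linarith
  intro i
  have hm : i.val ≤ k := Nat.lt_succ_iff.mp i.isLt
  have hp0 : F 0 = f 0 := by rw [hFeq 0 (Nat.zero_le k)]; rfl
  have hpk : F k = f (Fin.last k) := by rw [hFeq k le_rfl]; rfl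
  have hfi : F i.val = f i := by rw [hFeq i.val hm]
  have h1 := hchain 0 i.val (Nat.zero_le _)
  have h2 := hchain i.val k hm
  have hsplit : (∑ n ∈ Finset.Ico 0 i.val, g n) + ∑ n ∈ Finset.Ico i.val k, g n
      = ∑ n ∈ Finset.range k, g n := by
    rw [Finset.sum_Ico_consecutive _ (Nat.zero_le _) hm, Finset.range_eq_Ico]
  have tri := dist1_triangle (F 0) (F i.val) (F k)
  have hsum' : (∑ n ∈ Finset.range k, g n) = dist1 (F 0) (F k) := by
    rw [← hconv, hsum, hp0, hpk]
  have heq : dist1 (F 0) (F i.val) + dist1 (F i.val) (F k) = dist1 (F 0) (F k) := by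
    linarith
  rw [hp0, hpk, hfi] at heq
  set p := f 0
  set q := f (Fin.last k)
  set z := f i
  have tx := abs_sub_le p.1 z.1 q.1
  have ty := abs_sub_le p.2 z.2 q.2
  simp only [dist1] at heq
  have hx : |p.1 - z.1| + |z.1 - q.1| = |p.1 - q.1| := by linarith
  have hy : |p.2 - z.2| + |z.2 - q.2| = |p.2 - q.2| := by linarith
  obtain ⟨hx1, hx2⟩ := between_of_abs_eq hx
  obtain ⟨hy1, hy2⟩ := between_of_abs_eq hy
  exact ⟨hx1, hx2, hy1, hy2⟩

lemma rect_subset_of_axisRect {C : Set Pt} (hC : IsAxisRect C) {p q : Pt}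
    (hp : p ∈ C) (hq : q ∈ C) : Rect p q ⊆ C := by
  obtain ⟨I, J, hI, hJ, rfl⟩ := hC
  intro z hz
  obtain ⟨hz1, hz2, hz3, hz4⟩ := hz
  constructor
  · exact hI.uIcc_subset hp.1 hq.1 ⟨hz1, hz2⟩
  · exact hJ.uIcc_subset hp.2 hq.2 ⟨hz3, hz4⟩

lemma mconn_restrict {S : Set Pt} {p q : Pt} {C : Set Pt} (hC : IsAxisRect C)
    (hp : p ∈ C) (hq : q ∈ C) (h : MConnected S p q) : MConnected (S ∩ C) p q := by
  obtain ⟨k, f, h0, hl, hmem, hal, hsum⟩ := h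
  have hrect : ∀ i, f i ∈ Rect p q := by
    have := path_mem_rect f (by rw [h0, hl]; exact hsum)
    rw [h0, hl] at this
    exact this
  exact ⟨k, f, h0, hl, fun i => ⟨hmem i, rect_subset_of_axisRect hC hp hq (hrect i)⟩,
    hal, hsum⟩

lemma feasible_restrict (P : Finset Pt) (D : Finset Dem) (Q : Finset Pt)
    (hQ : MFeasible ↑P ↑D ↑Q) (C : Set Pt) (hC : IsAxisRect C) :
    MFeasible (↑P ∩ C) {d : Dem | d ∈ D ∧ d.1 ∈ C ∧ d.2 ∈ C} (↑Q ∩ C) := by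
  intro d hd
  obtain ⟨hdD, h1, h2⟩ := hd
  have hconn := hQ d hdD
  have := mconn_restrict hC h1 h2 hconn
  rwa [Set.union_inter_distrib_right] at this

lemma feasible_corners (P : Finset Pt) (D : Finset Dem) (hinst : IsInstance P D) :
    MFeasible ↑P ↑D ↑(D.image fun d : Dem => (d.1.1, d.2.2)) := by
  intro d hd
  have hd' : d ∈ D := hd
  refine ⟨2, ![d.1, (d.1.1, d.2.2), d.2], rfl, rfl, ?_, ?_, ?_⟩
  · intro i
    fin_cases i
    · left; exact Finset.mem_coe.mpr (hinst d hd').1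
    · right
      exact Finset.mem_coe.mpr (Finset.mem_image_of_mem _ hd')
    · left; exact Finset.mem_coe.mpr (hinst d hd').2.1
  · intro i
    fin_cases i
    · left; rfl
    · right; rfl
  · simp [Fin.sum_univ_two, dist1]
    ring

end Aux

/-- Restricting a feasible solution to an axis-aligned rectangle `C` yields a
feasible solution of the restricted instance; consequently, for pairwise disjoint axis-aligned
rectangles, `opt(P,D) ≥ Σᵢ opt(P ∩ Cᵢ, D ∩ (Cᵢ × Cᵢ))`. -/
theorem stmt18 (P : Finset Pt) (D : Finset Dem) (hinst : IsInstance P D)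
    (Q : Finset Pt) (hQ : MFeasible ↑P ↑D ↑Q)
    (C : Set Pt) (hC : IsAxisRect C) :
    MFeasible (↑P ∩ C) {d : Dem | d ∈ D ∧ d.1 ∈ C ∧ d.2 ∈ C} (↑Q ∩ C) ∧
    ∀ (m : ℕ) (Cf : Fin m → Set Pt),
      (∀ i, IsAxisRect (Cf i)) →
      (Pairwise fun i j => Disjoint (Cf i) (Cf j)) →
      ∑ i : Fin m, optN (↑P ∩ Cf i) {d : Dem | d ∈ D ∧ d.1 ∈ Cf i ∧ d.2 ∈ Cf i}
        ≤ optN ↑P ↑D := by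
  classical
  constructor
  · exact feasible_restrict P D Q hQ C hC
  · intro m Cf hCf hdisj
    -- the defining set of optN P D is nonempty
    have hne : {n | ∃ Q' : Finset Pt, MFeasible ↑P ↑D ↑Q' ∧ Q'.card = n}.Nonempty :=
      ⟨(D.image fun d : Dem => (d.1.1, d.2.2)).card,
        D.image fun d : Dem => (d.1.1, d.2.2), feasible_corners P D hinst, rfl⟩
    obtain ⟨Qmin, hQmin, hcard⟩ := Nat.sInf_mem hne
    rw [optN, ← hcard]
    -- each restricted optimum is at most the card of Qmin restricted to Cf i
    have hle : ∀ i : Fin m,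
        optN (↑P ∩ Cf i) {d : Dem | d ∈ D ∧ d.1 ∈ Cf i ∧ d.2 ∈ Cf i}
          ≤ (Qmin.filter (· ∈ Cf i)).card := by
      intro i
      apply Nat.sInf_le
      refine ⟨Qmin.filter (· ∈ Cf i), ?_, rfl⟩
      have hcoe : (↑(Qmin.filter (· ∈ Cf i)) : Set Pt) = ↑Qmin ∩ Cf i := by
        ext z; simp [Finset.mem_filter, Set.mem_inter_iff]
      rw [hcoe]
      exact feasible_restrict P D Qmin hQmin (Cf i) (hCf i)
    calc ∑ i : Fin m, optN (↑P ∩ Cf i) {d : Dem | d ∈ D ∧ d.1 ∈ Cf i ∧ d.2 ∈ Cf i}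
        ≤ ∑ i : Fin m, (Qmin.filter (· ∈ Cf i)).card := Finset.sum_le_sum fun i _ => hle i
      _ = ∑ i : Fin m, ∑ q ∈ Qmin, (if q ∈ Cf i then 1 else 0) :=
          Finset.sum_congr rfl fun i _ => Finset.card_filter _ _
      _ = ∑ q ∈ Qmin, ∑ i : Fin m, (if q ∈ Cf i then 1 else 0) := Finset.sum_comm
      _ ≤ ∑ _q ∈ Qmin, 1 := by
          apply Finset.sum_le_sum
          intro q _
          have : (∑ i : Fin m, (if q ∈ Cf i then 1 else 0))
              = (Finset.univ.filter fun i : Fin m => q ∈ Cf i).card := by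
            rw [Finset.card_filter]
          rw [this]
          apply Finset.card_le_one.mpr
          intro a ha b hb
          simp only [Finset.mem_filter] at ha hb
          by_contra hab
          exact Set.disjoint_left.mp (hdisj hab) ha.2 hb.2
      _ = Qmin.card := by simp
end
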